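/- arXiv:1701.04227 — 9 statements merged into one kernel-verified Lean document; each statement's English description precedes it below -/
import Mathlib

section
/- The complete binary tree of height 2 (the tree T_{2,2} with a root, 2 children, and 4 grandchildren) has Thue chromatic index exactly 4: it admits a nonrepetitive edge-coloring with 4 colors but not with 3. -/
/-- A repetition: a nonempty sequence whose first half equals its second half. -/
def IsRepetition {α : Type*} (l : List α) : Prop := ∃ w : List α, w ≠ [] ∧ l = w ++ w

/-- An edge-coloring is nonrepetitive if no path carries a repetitive color sequence. -/
def NonrepEdgeColoring {V α : Type*} (G : SimpleGraph V) (c : Sym2 V → α) : Prop :=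
  ∀ u v : V, ∀ p : G.Walk u v, p.IsPath → ¬ IsRepetition (p.edges.map c)

/-- The Thue chromatic index: minimum number of colors in a nonrepetitive edge-coloring. -/
noncomputable def thueIdx {V : Type*} (G : SimpleGraph V) : ℕ :=
  sInf {n | ∃ c : Sym2 V → ℕ, (∀ e ∈ G.edgeSet, c e < n) ∧ NonrepEdgeColoring G c}

/-- The complete binary tree of height 2: a root `0`, its children `1, 2`, and
grandchildren `3, 4, 5, 6`. -/
def T22 : SimpleGraph (Fin 7) :=
  SimpleGraph.fromEdgeSet {s(0, 1), s(0, 2), s(1, 3), s(1, 4), s(2, 5), s(2, 6)}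

instance : DecidableRel T22.Adj := fun u v =>
  decidable_of_iff ((s(u,v) = s(0,1) ∨ s(u,v) = s(0,2) ∨ s(u,v) = s(1,3) ∨ s(u,v) = s(1,4)
      ∨ s(u,v) = s(2,5) ∨ s(u,v) = s(2,6)) ∧ u ≠ v) (by
    rw [T22, SimpleGraph.fromEdgeSet_adj]
    simp [Set.mem_insert_iff])

def repCheck (l : List ℕ) : Prop :=
  l ≠ [] ∧ l.take (l.length / 2) = l.drop (l.length / 2)

instance : DecidablePred repCheck := fun l => by unfold repCheck; infer_instance

lemma rep_imp_check {l : List ℕ} (h : IsRepetition l) : repCheck l := by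
  obtain ⟨w, hw, rfl⟩ := h
  have hlen : (w ++ w).length / 2 = w.length := by
    simp [List.length_append]; omega
  exact ⟨by simp [hw], by rw [hlen, List.take_left, List.drop_left]⟩

def myc : Sym2 (Fin 7) → ℕ := fun e =>
  if e = s(0,1) then 0 else if e = s(0,2) then 1 else if e = s(1,3) then 2
  else if e = s(1,4) then 3 else if e = s(2,5) then 2 else 3

set_option maxHeartbeats 4000000 in
lemma check4 : ∀ (u v : Fin 7) (p : {q : T22.Walk u v // q.length < 7}),
    p.1.support.Nodup → ¬ repCheck (p.1.edges.map myc) := by decide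

lemma myc_nonrep : NonrepEdgeColoring T22 myc := by
  intro u v p hp hrep
  have hlen : p.length < 7 := by simpa using hp.length_lt
  exact check4 u v ⟨p, hlen⟩ ((SimpleGraph.Walk.isPath_def p).mp hp) (rep_imp_check hrep)

section Lower

variable {V : Type*} {G : SimpleGraph V} {c : Sym2 V → ℕ}

lemma two_ne (h : NonrepEdgeColoring G c) {a b d : V} (hab : G.Adj a b) (hbd : G.Adj b d)
    (had : a ≠ d) : c s(a,b) ≠ c s(b,d) := by
  intro he
  refine h a d (.cons hab (.cons hbd .nil)) ?_ ⟨[c s(a,b)], by simp, by simp [he]⟩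
  simp [SimpleGraph.Walk.isPath_def, hab.ne, hbd.ne, had]

lemma four_rep (h : NonrepEdgeColoring G c) {a b d e f : V}
    (hab : G.Adj a b) (hbd : G.Adj b d) (hde : G.Adj d e) (hef : G.Adj e f)
    (had : a ≠ d) (hae : a ≠ e) (haf : a ≠ f) (hbe : b ≠ e) (hbf : b ≠ f) (hdf : d ≠ f)
    (h1 : c s(a,b) = c s(d,e)) (h2 : c s(b,d) = c s(e,f)) : False := by
  refine h a f (.cons hab (.cons hbd (.cons hde (.cons hef .nil)))) ?_
    ⟨[c s(a,b), c s(b,d)], by simp, by simp [h1, h2]⟩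
  simp [SimpleGraph.Walk.isPath_def, hab.ne, hbd.ne, hde.ne, hef.ne, had, hae, haf, hbe, hbf, hdf]

end Lower

/-- The complete binary tree of height 2 has Thue chromatic index exactly 4. -/
theorem stmt4 : thueIdx T22 = 4 := by
  have hmem : 4 ∈ {n | ∃ c : Sym2 (Fin 7) → ℕ,
      (∀ e ∈ T22.edgeSet, c e < n) ∧ NonrepEdgeColoring T22 c} := by
    refine ⟨myc, fun e _ => ?_, myc_nonrep⟩
    unfold myc; split_ifs <;> norm_num
  refine le_antisymm (Nat.sInf_le hmem) (le_csInf ⟨4, hmem⟩ ?_)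
  rintro n ⟨c, hc, hnr⟩
  by_contra hn
  push_neg at hn
  have h01 : T22.Adj 0 1 := by decide
  have h02 : T22.Adj 0 2 := by decide
  have h13 : T22.Adj 1 3 := by decide
  have h14 : T22.Adj 1 4 := by decide
  have h25 : T22.Adj 2 5 := by decide
  have h26 : T22.Adj 2 6 := by decide
  have b01 : c s(0,1) < n := hc _ (T22.mem_edgeSet.mpr h01)
  have b02 : c s(0,2) < n := hc _ (T22.mem_edgeSet.mpr h02)
  have b13 : c s(1,3) < n := hc _ (T22.mem_edgeSet.mpr h13)
  have b14 : c s(1,4) < n := hc _ (T22.mem_edgeSet.mpr h14)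
  have b25 : c s(2,5) < n := hc _ (T22.mem_edgeSet.mpr h25)
  have b26 : c s(2,6) < n := hc _ (T22.mem_edgeSet.mpr h26)
  have n12 : c s(0,1) ≠ c s(0,2) := fun h =>
    two_ne hnr h01.symm h02 (by decide) ((congrArg c Sym2.eq_swap).trans h)
  have nA : c s(0,1) ≠ c s(1,3) := two_ne hnr h01 h13 (by decide)
  have nB : c s(0,1) ≠ c s(1,4) := two_ne hnr h01 h14 (by decide)
  have nC : c s(1,3) ≠ c s(1,4) := fun h =>
    two_ne hnr h13.symm h14 (by decide) ((congrArg c Sym2.eq_swap).trans h)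
  have nD : c s(0,2) ≠ c s(2,5) := two_ne hnr h02 h25 (by decide)
  have nE : c s(0,2) ≠ c s(2,6) := two_ne hnr h02 h26 (by decide)
  have nF : c s(2,5) ≠ c s(2,6) := fun h =>
    two_ne hnr h25.symm h26 (by decide) ((congrArg c Sym2.eq_swap).trans h)
  have hcase1 : c s(1,3) = c s(0,2) ∨ c s(1,4) = c s(0,2) := by omega
  have hcase2 : c s(2,5) = c s(0,1) ∨ c s(2,6) = c s(0,1) := by omega
  have doit : ∀ x y : Fin 7, T22.Adj 1 x → T22.Adj 2 y → x ≠ 0 → x ≠ 2 → x ≠ y →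
      y ≠ 0 → y ≠ 1 → c s(1,x) = c s(0,2) → c s(2,y) = c s(0,1) → False := by
    intro x y h1x h2y hx0 hx2 hxy hy0 hy1 e1 e2
    exact four_rep hnr h1x.symm h01.symm h02 h2y hx0 hx2 hxy (by decide) (Ne.symm hy1)
      (Ne.symm hy0) ((congrArg c Sym2.eq_swap).trans e1)
      ((congrArg c Sym2.eq_swap).trans e2.symm)
  rcases hcase1 with e1 | e1 <;> rcases hcase2 with e2 | e2
  · exact doit 3 5 h13 h25 (by decide) (by decide) (by decide) (by decide) (by decide) e1 e2
  · exact doit 3 6 h13 h26 (by decide) (by decide) (by decide) (by decide) (by decide) e1 e2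
  · exact doit 4 5 h14 h25 (by decide) (by decide) (by decide) (by decide) (by decide) e1 e2
  · exact doit 4 6 h14 h26 (by decide) (by decide) (by decide) (by decide) (by decide) e1 e2
end

section
/- A sequence S has a k-bad index sequence of length at most four with turning index m ≤ 3 if and only if there exist indices i < j with j < i + 2k and s_i = s_j. -/
/-- `i 1, …, i (2r)` (1-indexed) is a `k`-bad index sequence for the 1-indexed sequence `S`,
with turning index `m`: the symbols form a repetition, the indices strictly decrease up to
position `m` and then strictly increase, consecutive indices differ by at most `k`, and the
gap at the turn is strictly less than `k` when the turn is internal. -/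
def KBadIdx {α : Type*} (k : ℕ) (S : ℕ → α) (r m : ℕ) (i : ℕ → ℕ) : Prop :=
  1 ≤ r ∧ 1 < m ∧ m ≤ 2 * r ∧
  (∀ j, 1 ≤ j → j ≤ r → S (i j) = S (i (j + r))) ∧
  (∀ j, 1 ≤ j → j < m → i (j + 1) < i j) ∧
  (∀ j, m ≤ j → j < 2 * r → i j < i (j + 1)) ∧
  (∀ j, 1 ≤ j → j < 2 * r → i (j + 1) ≤ i j + k ∧ i j ≤ i (j + 1) + k) ∧
  (m < 2 * r → i (m + 1) < i m + k)

/-- A finite sequence `S` (1-indexed, of length `n`) is `k`-special if it admits no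
`k`-bad index sequence with all indices in `{1, …, n}`. -/
def KSpecialFin {α : Type*} (k : ℕ) (S : ℕ → α) (n : ℕ) : Prop :=
  ¬ ∃ r m i, KBadIdx k S r m i ∧ ∀ j, 1 ≤ j → j ≤ 2 * r → 1 ≤ i j ∧ i j ≤ n

/-- An infinite sequence `S` (1-indexed) is `k`-special if it admits no `k`-bad index
sequence. -/
def KSpecialInf {α : Type*} (k : ℕ) (S : ℕ → α) : Prop :=
  ¬ ∃ r m i, KBadIdx k S r m i ∧ ∀ j, 1 ≤ j → j ≤ 2 * r → 1 ≤ i j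

/-- The sequence `S_{n,c} = 1, 2, …, n, 1, 2, …, c` (1-indexed; entry at position `i` is `i`
for `i ≤ n` and `i - n` for `i > n`). -/
def Snc (n : ℕ) (c : ℕ) : ℕ → ℕ := fun i => if i ≤ n then i else i - n

/-- A sequence `S` has a `k`-bad index sequence of length at most four with turning index
`m ≤ 3` if and only if there are indices `p < q` with `q < p + 2k` and `S p = S q`. -/
theorem stmt5 {α : Type*} (k : ℕ) (hk : 1 ≤ k) (S : ℕ → α) :
    (∃ r m i, r ≤ 2 ∧ m ≤ 3 ∧ KBadIdx k S r m i ∧ ∀ j, 1 ≤ j → j ≤ 2 * r → 1 ≤ i j) ↔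
    (∃ p q : ℕ, 1 ≤ p ∧ p < q ∧ q < p + 2 * k ∧ S p = S q) := by

  constructor
  · rintro ⟨r, m, i, hr2, hm3, ⟨hr1, hm1, hm2r, hrep, hdec, hinc, hgap, hturn⟩, hpos⟩
    interval_cases r
    · -- r = 1, so m = 2
      have hm : m = 2 := by omega
      subst hm
      have h1 : S (i 1) = S (i 2) := hrep 1 le_rfl le_rfl
      have h2 : i 2 < i 1 := hdec 1 le_rfl (by norm_num)
      have h3 := hgap 1 le_rfl (by norm_num)
      norm_num at h3
      exact ⟨i 2, i 1, hpos 2 (by norm_num) (by norm_num), h2, by omega, h1.symm⟩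
    · -- r = 2, m = 2 or 3
      have hrep1 : S (i 1) = S (i 3) := hrep 1 le_rfl (by norm_num)
      have hrep2 : S (i 2) = S (i 4) := hrep 2 (by norm_num) le_rfl
      have hg1 := hgap 1 le_rfl (by norm_num)
      have hg2 := hgap 2 (by norm_num) (by norm_num)
      have hg3 := hgap 3 (by norm_num) (by norm_num)
      norm_num at hg1 hg2 hg3
      interval_cases m
      · -- m = 2
        have h23 : i 2 < i 3 := hinc 2 le_rfl (by norm_num)
        have h34 : i 3 < i 4 := hinc 3 (by norm_num) (by norm_num)
        have ht : i 3 < i 2 + k := hturn (by norm_num)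
        exact ⟨i 2, i 4, hpos 2 (by norm_num) (by norm_num), by omega, by omega, hrep2⟩
      · -- m = 3
        have h12 : i 2 < i 1 := hdec 1 le_rfl (by norm_num)
        have h23 : i 3 < i 2 := hdec 2 (by norm_num) (by norm_num)
        have h34 : i 3 < i 4 := hinc 3 le_rfl (by norm_num)
        have ht : i 4 < i 3 + k := hturn (by norm_num)
        rcases lt_trichotomy (i 2) (i 4) with h | h | h
        · exact ⟨i 2, i 4, hpos 2 (by norm_num) (by norm_num), h, by omega, hrep2⟩
        · exact ⟨i 3, i 1, hpos 3 (by norm_num) (by norm_num), by omega, by omega,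
            hrep1.symm⟩
        · exact ⟨i 4, i 2, hpos 4 (by norm_num) (by norm_num), h, by omega, hrep2.symm⟩
  · rintro ⟨p, q, hp, hpq, hq2k, hS⟩
    by_cases hcase : q ≤ p + k
    · refine ⟨1, 2, fun j => if j = 1 then q else p, by norm_num, by norm_num,
        ⟨le_rfl, one_lt_two, by norm_num, ?_, ?_, ?_, ?_, ?_⟩, ?_⟩
      · intro j hj1 hj2
        interval_cases j
        simp [hS.symm]
      · intro j hj1 hj2
        interval_cases j
        simpa using hpq
      · intro j hj1 hj2
        omega
      · intro j hj1 hj2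
        interval_cases j
        simp only [if_pos rfl]
        norm_num
        omega
      · intro h
        omega
      · intro j hj1 hj2
        interval_cases j <;> simp <;> omega
    · push_neg at hcase
      refine ⟨2, 2, fun j => if j = 2 then p else if j = 4 then q else q - k,
        le_rfl, by norm_num, ⟨by norm_num, one_lt_two, by norm_num, ?_, ?_, ?_, ?_, ?_⟩, ?_⟩
      · intro j hj1 hj2
        interval_cases j <;> simp [hS]
      · intro j hj1 hj2
        interval_cases j
        simp only [if_pos rfl]
        norm_num
        omega
      · intro j hj1 hj2
        interval_cases j <;> simp <;> omega
      · intro j hj1 hj2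
        interval_cases j <;> simp <;> omega
      · intro h
        simp only [if_pos rfl]
        norm_num
        omega
      · intro j hj1 hj2
        interval_cases j <;> simp <;> omega
end

section
/- If S is a k-special sequence, then any two equal entries of S are at least 2k apart: s_i = s_j with i < j implies j ≥ i + 2k. -/
/-- In a `k`-special sequence, equal entries are at least `2k` apart: `S p = S q` with
`p < q` implies `q ≥ p + 2k`. -/
theorem stmt6 {α : Type*} (k : ℕ) (hk : 1 ≤ k) (S : ℕ → α) (hS : KSpecialInf k S) :
    ∀ p q : ℕ, 1 ≤ p → p < q → S p = S q → p + 2 * k ≤ q := by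
  intro p q hp hpq heq
  by_contra h
  push_neg at h
  apply hS
  by_cases hcase : q ≤ p + k
  · refine ⟨1, 2, fun j => if j ≤ 1 then q else p, ?_, ?_⟩
    · refine ⟨le_refl 1, one_lt_two, by norm_num, ?_, ?_, ?_, ?_, ?_⟩
      · intro j h1 h2
        interval_cases j
        simp [heq]
      · intro j h1 h2
        interval_cases j
        simp; omega
      · intro j h1 h2; omega
      · intro j h1 h2
        interval_cases j
        simp; omega
      · intro hm; omega
    · intro j h1 h2
      dsimp only; split <;> omega
  · refine ⟨2, 3, fun j => if j = 1 then q else if j = 3 then p else q - k, ?_, ?_⟩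
    · refine ⟨by norm_num, by norm_num, by norm_num, ?_, ?_, ?_, ?_, ?_⟩
      · intro j h1 h2
        interval_cases j <;> simp [heq]
      · intro j h1 h2
        interval_cases j <;> simp <;> omega
      · intro j h1 h2
        interval_cases j
        simp; omega
      · intro j h1 h2
        interval_cases j <;> simp <;> omega
      · intro hm
        simp; omega
    · intro j h1 h2
      dsimp only
      split
      · omega
      · split <;> omega
end

section
/- Any k-special sequence on n symbols with n < 2k has length at most n, and consequently all its entries are pairwise distinct. -/
/-- In a `k`-special sequence, equal entries are at least `2k` apart. -/
lemma close_ne {k L : ℕ} {S : ℕ → ℕ} (hk : 1 ≤ k) (hspec : KSpecialFin k S L)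
    {p q : ℕ} (hp : 1 ≤ p) (hpq : p < q) (hq : q ≤ L) (hlt : q < p + 2 * k) :
    S p ≠ S q := by
  intro heq
  apply hspec
  by_cases hcase : q ≤ p + k
  · refine ⟨1, 2, fun j => if j = 1 then q else p, ?_, ?_⟩
    · refine ⟨le_rfl, one_lt_two, le_rfl, ?_, ?_, ?_, ?_, ?_⟩
      · intro j h1 h2
        have : j = 1 := by omega
        subst this; simp [heq]
      · intro j h1 h2
        have : j = 1 := by omega
        subst this; simpa using hpq
      · intro j h1 h2; omega
      · intro j h1 h2
        have : j = 1 := by omega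
        subst this; simp; omega
      · intro h; omega
    · intro j h1 h2
      by_cases hj : j = 1 <;> simp [hj] <;> omega
  · set t := max (p+1) (q-k) with ht
    have ht1 : p + 1 ≤ t := le_max_left _ _
    have ht2 : q - k ≤ t := le_max_right _ _
    have ht3 : t < p + k := max_lt (by omega) (by omega)
    have ht4 : t < q := max_lt (by omega) (by omega)
    refine ⟨2, 3, fun j => if j = 1 then q else if j = 3 then p else t, ?_, ?_⟩
    · refine ⟨one_le_two, by norm_num, by norm_num, ?_, ?_, ?_, ?_, ?_⟩
      · intro j h1 h2
        interval_cases j <;> simp [heq]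
      · intro j h1 h2
        interval_cases j <;> simp <;> omega
      · intro j h1 h2
        interval_cases j <;> simp <;> omega
      · intro j h1 h2
        interval_cases j <;> simp <;> omega
      · intro h; simp; omega
    · intro j h1 h2
      interval_cases j <;> simp <;> omega

/-- A `k`-special sequence on `n` symbols with `n < 2k` has length at most `n`, and all
its entries are pairwise distinct. -/
theorem stmt7 (k n L : ℕ) (hk : 1 ≤ k) (hn : n < 2 * k) (S : ℕ → ℕ)
    (hspec : KSpecialFin k S L)
    (hsym : ((Finset.Icc 1 L).image S).card ≤ n) :
    L ≤ n ∧ ∀ p q : ℕ, 1 ≤ p → p < q → q ≤ L → S p ≠ S q := by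
  have hL : L ≤ n := by
    by_contra hLn
    push_neg at hLn
    have hinj : Set.InjOn S ↑(Finset.Icc 1 (n+1)) := by
      intro a ha b hb hab
      simp only [Finset.coe_Icc, Set.mem_Icc] at ha hb
      by_contra hne
      rcases Nat.lt_or_ge a b with h | h
      · exact close_ne hk hspec ha.1 h (by omega) (by omega) hab
      · exact close_ne hk hspec hb.1 (by omega) (by omega) (by omega) hab.symm
    have h1 : ((Finset.Icc 1 (n+1)).image S).card = n+1 := by
      rw [Finset.card_image_of_injOn hinj, Nat.card_Icc]; omega
    have h2 : ((Finset.Icc 1 (n+1)).image S).card ≤ ((Finset.Icc 1 L).image S).card :=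
      Finset.card_le_card (Finset.image_subset_image (Finset.Icc_subset_Icc le_rfl (by omega)))
    omega
  refine ⟨hL, fun p q hp hpq hq => close_ne hk hspec hp hpq hq (by omega)⟩
end

section
/- For every k ≥ 1 the sequence S_{2k,1} = 1,2,...,2k,1 is k-special, while S_{2k,2} = 1,2,...,2k,1,2 is not k-special; hence the maximum length f_k(2k) of a k-special sequence on 2k symbols equals 2k+1. -/
lemma bad_r1 {S : ℕ → ℕ} {k n p q : ℕ} (hp : 1 ≤ p) (hpq : p < q)
    (hgap : q ≤ p + k) (hn : q ≤ n) (hS : S p = S q) :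
    ∃ r m i, KBadIdx k S r m i ∧ ∀ j, 1 ≤ j → j ≤ 2 * r → 1 ≤ i j ∧ i j ≤ n := by
  refine ⟨1, 2, fun j => if j = 1 then q else p,
    ⟨by omega, by omega, by omega, ?_, ?_, ?_, ?_, ?_⟩, ?_⟩
  · intro j hj1 hj2; interval_cases j; simpa using hS.symm
  · intro j hj1 hj2; interval_cases j; simp; omega
  · intro j hj1 hj2; omega
  · intro j hj1 hj2; interval_cases j <;> simp <;> omega
  · intro h; omega
  · intro j hj1 hj2; interval_cases j <;> simp <;> omega

lemma bad_r2m2 {S : ℕ → ℕ} {k n p q : ℕ} (hp : 1 ≤ p) (h1 : p + k < q)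
    (h2 : q < p + 2 * k) (hn : q ≤ n) (hS : S p = S q) :
    ∃ r m i, KBadIdx k S r m i ∧ ∀ j, 1 ≤ j → j ≤ 2 * r → 1 ≤ i j ∧ i j ≤ n := by
  refine ⟨2, 2, fun j => if j = 2 then p else if j = 4 then q else q - k,
    ⟨by omega, by omega, by omega, ?_, ?_, ?_, ?_, ?_⟩, ?_⟩
  · intro j hj1 hj2; interval_cases j
    · simp
    · simpa using hS
  · intro j hj1 hj2; interval_cases j; simp; omega
  · intro j hj1 hj2; interval_cases j <;> simp <;> omega
  · intro j hj1 hj2; interval_cases j <;> simp <;> omega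
  · intro h; simp; omega
  · intro j hj1 hj2; interval_cases j <;> simp <;> omega

lemma bad_k1 {S : ℕ → ℕ} {k n : ℕ} (hk : 1 ≤ k) (h13 : S 1 = S 3) (h24 : S 2 = S 4)
    (hn : 4 ≤ n) :
    ∃ r m i, KBadIdx k S r m i ∧ ∀ j, 1 ≤ j → j ≤ 2 * r → 1 ≤ i j ∧ i j ≤ n := by
  refine ⟨2, 4, fun j => 5 - j,
    ⟨by omega, by omega, by omega, ?_, ?_, ?_, ?_, ?_⟩, ?_⟩
  · intro j hj1 hj2; interval_cases j
    · simpa using h24.symm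
    · simpa using h13.symm
  · intro j hj1 hj2; interval_cases j <;> simp <;> omega
  · intro j hj1 hj2; omega
  · intro j hj1 hj2; interval_cases j <;> simp <;> omega
  · intro h; omega
  · intro j hj1 hj2; interval_cases j <;> simp <;> omega

lemma bad_k2 {S : ℕ → ℕ} {k n : ℕ} (hk : 2 ≤ k) (hA : S 1 = S (2 * k + 1))
    (hB : S 2 = S (2 * k + 2)) (hn : 2 * k + 2 ≤ n) :
    ∃ r m i, KBadIdx k S r m i ∧ ∀ j, 1 ≤ j → j ≤ 2 * r → 1 ≤ i j ∧ i j ≤ n := by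
  refine ⟨3, 2, fun j => if j = 2 then 1 else if j = 3 then 2 else if j = 5 then 2 * k + 1
      else if j = 6 then 2 * k + 2 else k + 1,
    ⟨by omega, by omega, by omega, ?_, ?_, ?_, ?_, ?_⟩, ?_⟩
  · intro j hj1 hj2; interval_cases j
    · simp
    · simpa using hA
    · simpa using hB
  · intro j hj1 hj2; interval_cases j; simp; omega
  · intro j hj1 hj2; interval_cases j <;> simp <;> omega
  · intro j hj1 hj2; interval_cases j <;> simp <;> omega
  · intro h; simp; omega
  · intro j hj1 hj2; interval_cases j <;> simp <;> omega

/-- `S_{2k,1} = 1, …, 2k, 1` is `k`-special, `S_{2k,2} = 1, …, 2k, 1, 2` is not, and every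
`k`-special sequence on `2k` symbols has length at most `2k + 1`; hence the maximum length
`f_k(2k)` of a `k`-special sequence on `2k` symbols equals `2k + 1`. -/
theorem stmt8 (k : ℕ) (hk : 1 ≤ k) :
    KSpecialFin k (Snc (2 * k) 1) (2 * k + 1) ∧
    ¬ KSpecialFin k (Snc (2 * k) 2) (2 * k + 2) ∧
    (∀ (S : ℕ → ℕ) (L : ℕ), ((Finset.Icc 1 L).image S).card ≤ 2 * k →
      KSpecialFin k S L → L ≤ 2 * k + 1) := by
  refine ⟨?_, ?_, ?_⟩
  · -- Part 1 : S_{2k,1} is k-special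
    rintro ⟨r, m, i, ⟨hr, hm1, hm2, hpair, hdec, hinc, hgap, hturn⟩, hbound⟩
    have hinj : ∀ p q, 1 ≤ p → p ≤ 2 * k + 1 → 1 ≤ q → q ≤ 2 * k + 1 →
        Snc (2 * k) 1 p = Snc (2 * k) 1 q →
        p = q ∨ (p = 1 ∧ q = 2 * k + 1) ∨ (p = 2 * k + 1 ∧ q = 1) := by
      intro p q h1 h2 h3 h4 h
      simp only [Snc] at h
      split_ifs at h <;> omega
    have hdec' : ∀ b a, 1 ≤ a → a < b → b ≤ m → i b < i a := by
      intro b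
      induction b with
      | zero => intro a ha hab _; omega
      | succ c ih =>
        intro a ha hab hbm
        rcases Nat.lt_succ_iff_lt_or_eq.mp hab with h | h
        · exact lt_trans (hdec c (by omega) (by omega)) (ih a ha h (by omega))
        · subst h; exact hdec a ha (by omega)
    have hinc' : ∀ b a, m ≤ a → a < b → b ≤ 2 * r → i a < i b := by
      intro b
      induction b with
      | zero => intro a h1 h2 h3; omega
      | succ c ih =>
        intro a h1 h2 h3
        rcases Nat.lt_succ_iff_lt_or_eq.mp h2 with h | h
        · exact lt_trans (ih a h1 h (by omega)) (hinc c (by omega) (by omega))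
        · subst h; exact hinc a h1 (by omega)
    rcases le_or_gt m r with hmr | hrm
    · -- Case B : m ≤ r
      have hr2 : 2 ≤ r := by omega
      have b_m := hbound m (by omega) (by omega)
      have b_mr := hbound (m + r) (by omega) (by omega)
      have h1 : i m < i (m + r) := hinc' (m + r) m le_rfl (by omega) (by omega)
      have hd1 := hinj _ _ b_m.1 b_m.2 b_mr.1 b_mr.2 (hpair m (by omega) hmr)
      obtain ⟨him1, him2⟩ : i m = 1 ∧ i (m + r) = 2 * k + 1 := by
        rcases hd1 with h | h | h <;> omega
      have hm_eq : m = r := by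
        by_contra hne
        have hx := hinc (m + r) (by omega) (by omega)
        have hb := hbound (m + r + 1) (by omega) (by omega)
        omega
      subst hm_eq
      rw [show m + m = 2 * m from by omega] at him2
      have hturn' := hturn (by omega)
      have hp1 := hpair (m - 1) (by omega) (by omega)
      rw [show m - 1 + m = 2 * m - 1 from by omega] at hp1
      have b_r1 := hbound (m - 1) (by omega) (by omega)
      have b_2r1 := hbound (2 * m - 1) (by omega) (by omega)
      have b_2r := hbound (2 * m) (by omega) (by omega)
      have h2 : i m < i (m - 1) := hdec' m (m - 1) (by omega) (by omega) (by omega)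
      have h3 : i m < i (2 * m - 1) := hinc' (2 * m - 1) m le_rfl (by omega) (by omega)
      have h4 : i (2 * m - 1) < i (2 * m) := hinc' (2 * m) (2 * m - 1) (by omega) (by omega)
        (by omega)
      have hd2 := hinj _ _ b_r1.1 b_r1.2 b_2r1.1 b_2r1.2 hp1
      have heq : i (m - 1) = i (2 * m - 1) := by rcases hd2 with h | h | h <;> omega
      have g1 := hgap (m - 1) (by omega) (by omega)
      rw [show m - 1 + 1 = m from by omega] at g1
      have g2 := hgap (2 * m - 1) (by omega) (by omega)
      rw [show 2 * m - 1 + 1 = 2 * m from by omega] at g2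
      rcases eq_or_lt_of_le hr2 with hr2' | hr3
      · rw [show m + 1 = 2 * m - 1 from by omega] at hturn'
        omega
      · have hp2 := hpair 1 (by omega) (by omega)
        rw [show 1 + m = m + 1 from by omega] at hp2
        have b_1 := hbound 1 (by omega) (by omega)
        have b_r1' := hbound (m + 1) (by omega) (by omega)
        have h5 : i m < i (m + 1) := hinc' (m + 1) m le_rfl (by omega) (by omega)
        have h6 : i (m - 1) < i 1 := hdec' (m - 1) 1 (by omega) (by omega) (by omega)
        have hd3 := hinj _ _ b_1.1 b_1.2 b_r1'.1 b_r1'.2 hp2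
        omega
    · -- Case A : r < m
      have b_1 := hbound 1 (by omega) (by omega)
      have b_1r := hbound (1 + r) (by omega) (by omega)
      have h1 : i (1 + r) < i 1 := hdec' (1 + r) 1 (by omega) (by omega) (by omega)
      have hp0 := hpair 1 (by omega) (by omega)
      have hd1 := hinj _ _ b_1.1 b_1.2 b_1r.1 b_1r.2 hp0
      rw [show 1 + r = r + 1 from by omega] at hd1 h1 b_1r
      obtain ⟨e1, e2⟩ : i 1 = 2 * k + 1 ∧ i (r + 1) = 1 := by
        rcases hd1 with h | h | h <;> omega
      have hm_eq : m = r + 1 := by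
        by_contra hne
        have hx := hdec (r + 1) (by omega) (by omega)
        have hb := hbound (r + 1 + 1) (by omega) (by omega)
        omega
      subst hm_eq
      rcases eq_or_lt_of_le hr with hr1 | hr2
      · have g1 := hgap 1 (by omega) (by omega)
        rw [show (1 : ℕ) + 1 = 2 from rfl] at g1
        rw [show r + 1 = 2 from by omega] at e2
        omega
      · have hp2 := hpair 2 (by omega) (by omega)
        rw [show 2 + r = r + 2 from by omega] at hp2
        have b_2 := hbound 2 (by omega) (by omega)
        have b_r2 := hbound (r + 2) (by omega) (by omega)
        have h2a : i 2 < i 1 := by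
          have := hdec 1 (by omega) (by omega)
          rwa [show (1 : ℕ) + 1 = 2 from rfl] at this
        have h2b : i (r + 1) < i 2 := hdec' (r + 1) 2 (by omega) (by omega) le_rfl
        have hd2 := hinj _ _ b_2.1 b_2.2 b_r2.1 b_r2.2 hp2
        have g1 := hgap 1 (by omega) (by omega)
        rw [show (1 : ℕ) + 1 = 2 from rfl] at g1
        have ht := hturn (by omega)
        rw [show r + 1 + 1 = r + 2 from rfl] at ht
        omega
  · -- Part 2 : S_{2k,2} is not k-special
    have e1 : Snc (2 * k) 2 1 = Snc (2 * k) 2 (2 * k + 1) := by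
      simp only [Snc]; split_ifs <;> omega
    have e2 : Snc (2 * k) 2 2 = Snc (2 * k) 2 (2 * k + 2) := by
      simp only [Snc]; split_ifs <;> omega
    intro h
    rcases eq_or_lt_of_le hk with hk1 | hk2
    · refine h (bad_k1 hk ?_ ?_ (by omega))
      · rw [show (3 : ℕ) = 2 * k + 1 from by omega]; exact e1
      · rw [show (4 : ℕ) = 2 * k + 2 from by omega]; exact e2
    · exact h (bad_k2 hk2 e1 e2 (by omega))
  · -- Part 3 : maximality
    intro S L hcard hspec
    by_contra hL
    push_neg at hL
    have pg : ∀ lo hi, 1 ≤ lo → hi ≤ L → lo + 2 * k ≤ hi →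
        ∃ a b, lo ≤ a ∧ a < b ∧ b ≤ hi ∧ S a = S b := by
      intro lo hi h1 h2 h3
      have hmaps : ∀ x ∈ Finset.Icc lo hi, S x ∈ (Finset.Icc 1 L).image S := by
        intro x hxm
        simp only [Finset.mem_Icc] at hxm
        exact Finset.mem_image_of_mem S (Finset.mem_Icc.mpr ⟨by omega, by omega⟩)
      have hclt : ((Finset.Icc 1 L).image S).card < (Finset.Icc lo hi).card := by
        rw [Nat.card_Icc]; omega
      obtain ⟨x, hx, y, hy, hxy, hSxy⟩ :=
        Finset.exists_ne_map_eq_of_card_lt_of_maps_to hclt hmaps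
      simp only [Finset.mem_Icc] at hx hy
      rcases lt_or_gt_of_ne hxy with h | h
      exacts [⟨x, y, hx.1, h, hy.2, hSxy⟩, ⟨y, x, hy.1, h, hx.2, hSxy.symm⟩]
    obtain ⟨a, b, ha, hab, hb, hSab⟩ := pg 1 (2 * k + 1) (by omega) (by omega) (by omega)
    obtain ⟨c, d, hc, hcd, hd, hScd⟩ := pg 2 (2 * k + 2) (by omega) (by omega) (by omega)
    have hsmall : ∀ p q, 1 ≤ p → p < q → q ≤ L → q < p + 2 * k → S p = S q → False := by
      intro p q h1 h2 h3 h4 h5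
      by_cases h6 : q ≤ p + k
      · exact hspec (bad_r1 h1 h2 h6 h3 h5)
      · exact hspec (bad_r2m2 h1 (by omega) h4 h3 h5)
    by_cases h1 : b < a + 2 * k
    · exact hsmall a b ha hab (by omega) h1 hSab
    by_cases h2 : d < c + 2 * k
    · exact hsmall c d (by omega) hcd (by omega) h2 hScd
    obtain ⟨rfl, rfl⟩ : a = 1 ∧ b = 2 * k + 1 := by omega
    obtain ⟨rfl, rfl⟩ : c = 2 ∧ d = 2 * k + 2 := by omega
    have eA : S 1 = S (2 * k + 1) := hSab
    have eB : S 2 = S (2 * k + 2) := hScd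
    rcases eq_or_lt_of_le hk with hk1 | hk2
    · refine hspec (bad_k1 hk ?_ ?_ (by omega))
      · rw [show (3 : ℕ) = 2 * k + 1 from by omega]; exact eA
      · rw [show (4 : ℕ) = 2 * k + 2 from by omega]; exact eB
    · exact hspec (bad_k2 hk2 eA eB (by omega))
end

section
/- If n ≥ 2k+1, then the sequence S_{n,n−k} = 1,2,...,n,1,2,...,n−k is k-special; consequently f_k(n) ≥ 2n − k for n ≥ 2k+1. -/
/-- If `n ≥ 2k + 1`, then `S_{n,n-k} = 1, …, n, 1, …, n-k` (of length `2n - k`) is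
`k`-special; consequently `f_k(n) ≥ 2n - k`: there is a `k`-special sequence of length
`2n - k` on at most `n` symbols. -/
theorem stmt10 (k n : ℕ) (hk : 1 ≤ k) (hn : 2 * k + 1 ≤ n) :
    KSpecialFin k (Snc n (n - k)) (2 * n - k) ∧
    ∃ (S : ℕ → ℕ) (L : ℕ), L = 2 * n - k ∧
      ((Finset.Icc 1 L).image S).card ≤ n ∧ KSpecialFin k S L := by
  have hmain : KSpecialFin k (Snc n (n - k)) (2 * n - k) := by
    rintro ⟨r, m, i, ⟨hr, hm1, hm2, hsym, hdec, hinc, hstep, _⟩, hrange⟩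
    -- symbol equality forces trichotomy on indices
    have tri : ∀ j, 1 ≤ j → j ≤ r →
        i (j + r) = i j ∨ i (j + r) = i j + n ∨ i j = i (j + r) + n := by
      intro j hj1 hjr
      have h1 := hrange j hj1 (by omega)
      have h2 := hrange (j + r) (by omega) (by omega)
      have hs := hsym j hj1 hjr
      simp only [Snc] at hs
      split_ifs at hs <;> omega
    -- the offset is constant along j = 1, …, r
    have key : ∀ j, 1 ≤ j → j ≤ r →
        ((i (1 + r) = i 1 → i (j + r) = i j) ∧
         (i (1 + r) = i 1 + n → i (j + r) = i j + n) ∧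
         (i 1 = i (1 + r) + n → i j = i (j + r) + n)) := by
      intro j
      induction j with
      | zero => omega
      | succ j ih =>
        intro hj1 hjr
        rcases Nat.lt_or_ge 1 (j + 1) with h1 | h1
        · have hj : 1 ≤ j := by omega
          have IH := ih hj (by omega)
          have t := tri (j + 1) (by omega) hjr
          have s1 := hstep j (by omega) (by omega)
          have s2 := hstep (j + r) (by omega) (by omega)
          have e : j + 1 + r = j + r + 1 := by omega
          rw [e] at t ⊢
          refine ⟨fun h => ?_, fun h => ?_, fun h => ?_⟩ <;> omega
        · have e : j + 1 = 1 := by omega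
          rw [e]
          exact ⟨fun h => h, fun h => h, fun h => h⟩
    -- strict decrease up to m
    have anti : ∀ b, 1 ≤ b → b ≤ m → ∀ a, 1 ≤ a → a < b → i b < i a := by
      intro b
      induction b with
      | zero => omega
      | succ b ih =>
        intro _ hb2 a ha hab
        have hb1 : 1 ≤ b := by omega
        have h := hdec b hb1 (by omega)
        rcases Nat.lt_or_ge a b with h' | h'
        · exact lt_trans h (ih hb1 (by omega) a ha h')
        · have hab' : a = b := by omega
          rw [hab']; exact h
    -- strict increase from m on
    have mono : ∀ b, m ≤ b → b ≤ 2 * r → ∀ a, m ≤ a → a < b → i a < i b := by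
      intro b
      induction b with
      | zero => omega
      | succ b ih =>
        intro _ hb2 a ha hab
        have hbm : m ≤ b := by omega
        have h := hinc b hbm (by omega)
        rcases Nat.lt_or_ge a b with h' | h'
        · exact lt_trans (ih hbm (by omega) a ha h') h
        · have hab' : a = b := by omega
          rw [hab']; exact h
    have hi1 := hrange 1 le_rfl (by omega)
    have h2r := hrange (2 * r) (by omega) le_rfl
    have e2 : r + r = 2 * r := by omega
    have e1 : r + 1 = 1 + r := by omega
    have K := key r hr le_rfl
    rw [e2] at K
    have s := hstep r hr (by omega)
    rw [e1] at s
    rcases tri 1 le_rfl hr with h0 | hp | hm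
    · -- offset 0
      rcases Nat.lt_or_ge r m with hmr | hmr
      · -- m ≥ r + 1 : i (r+1) < i 1, but also i (1+r) = i 1
        have := anti (r + 1) (by omega) (by omega) 1 le_rfl (by omega)
        rw [e1] at this
        omega
      · -- m ≤ r : i r < i (2r) = i r
        have := mono (2 * r) (by omega) le_rfl r hmr (by omega)
        have := K.1 h0
        omega
    · -- offset +n
      have := K.2.1 hp
      omega
    · -- offset -n
      have := K.2.2 hm
      omega
  refine ⟨hmain, Snc n (n - k), 2 * n - k, rfl, ?_, hmain⟩
  have hsub : ((Finset.Icc 1 (2 * n - k)).image (Snc n (n - k))) ⊆ Finset.Icc 1 n := by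
    intro x hx
    simp only [Finset.mem_image, Finset.mem_Icc] at hx ⊢
    obtain ⟨a, ⟨ha1, ha2⟩, hax⟩ := hx
    simp only [Snc] at hax
    split_ifs at hax <;> omega
  calc ((Finset.Icc 1 (2 * n - k)).image (Snc n (n - k))).card
      ≤ (Finset.Icc 1 n).card := Finset.card_le_card hsub
    _ = n := by rw [Nat.card_Icc]; omega
end

section
/- If n = 2k, then every k-bad index sequence for S_{2k,k} = 1,...,2k,1,...,k has turning index m = 2 and half-length r > 2 (in particular r ≥ 3). -/
lemma snc_eq (k p q : ℕ) (hp1 : 1 ≤ p) (hp : p ≤ 3*k) (hq1 : 1 ≤ q) (hq : q ≤ 3*k)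
    (h : Snc (2*k) k p = Snc (2*k) k q) : p = q ∨ p + 2*k = q ∨ q + 2*k = p := by
  unfold Snc at h
  split_ifs at h <;> omega

/-- For `n = 2k`, every `k`-bad index sequence for `S_{2k,k} = 1, …, 2k, 1, …, k` (of
length `3k`) has turning index `m = 2` and half-length `r > 2`. -/
theorem stmt11 (k : ℕ) (hk : 1 ≤ k) :
    ∀ (r m : ℕ) (i : ℕ → ℕ), KBadIdx k (Snc (2 * k) k) r m i →
      (∀ j, 1 ≤ j → j ≤ 2 * r → 1 ≤ i j ∧ i j ≤ 3 * k) → m = 2 ∧ 2 < r := by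
  intro r m i h hbnd
  obtain ⟨hr, hm1, hm2, hrep, hdec, hinc, hstep, hgap⟩ := h
  have L1 : ∀ d a, 1 ≤ a → a + d + 1 ≤ m → i (a + d + 1) < i a := by
    intro d
    induction d with
    | zero => intro a ha hb; exact hdec a ha (by omega)
    | succ d ih =>
      intro a ha hb
      have h1 := hdec (a + d + 1) (by omega) (by omega)
      have h2 := ih a ha (by omega)
      show i (a + d + 1 + 1) < i a
      exact h1.trans h2
  have L2 : ∀ d a, m ≤ a → a + d + 1 ≤ 2 * r → i a < i (a + d + 1) := by
    intro d
    induction d with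
    | zero => intro a ha hb; exact hinc a ha (by omega)
    | succ d ih =>
      intro a ha hb
      have h1 := hinc (a + d + 1) (by omega) (by omega)
      have h2 := ih a ha (by omega)
      show i a < i (a + d + 1 + 1)
      exact h2.trans h1
  have L3 : ∀ d a, 1 ≤ a → a + d ≤ 2 * r → i (a + d) ≤ i a + d * k := by
    intro d
    induction d with
    | zero => intro a _ _; simp
    | succ d ih =>
      intro a ha hb
      have h1 := (hstep (a + d) (by omega) (by omega)).1
      have h2 := ih a ha (by omega)
      have h3 : (d+1) * k = d * k + k := by ring
      show i (a + d + 1) ≤ i a + (d+1) * k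
      omega
  by_cases hcase : m ≤ r
  · -- turn pair gives i (m+r) = i m + 2k
    have hb1 := hbnd m (by omega) (by omega)
    have hbmr := hbnd (m + r) (by omega) (by omega)
    have hlt : i m < i (m + r) := by
      have := L2 (r - 1) m le_rfl (by omega)
      have e : m + (r - 1) + 1 = m + r := by omega
      rwa [e] at this
    have hs := hrep m (by omega) hcase
    have hA : i (m + r) = i m + 2 * k := by
      rcases snc_eq k _ _ hb1.1 hb1.2 hbmr.1 hbmr.2 hs with h | h | h <;> omega
    have hm2r : m < 2 * r := by omega
    have hg := hgap hm2r
    have hchain : i (m + r) ≤ i (m + 1) + (r - 1) * k := by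
      have := L3 (r - 1) (m + 1) (by omega) (by omega)
      have e : m + 1 + (r - 1) = m + r := by omega
      rwa [e] at this
    have hrgt : 2 < r := by
      by_contra hcon
      have hr2 : r - 1 ≤ 1 := by omega
      have : (r - 1) * k ≤ 1 * k := Nat.mul_le_mul_right k hr2
      have h1k : 1 * k = k := one_mul k
      omega
    refine ⟨?_, hrgt⟩
    by_contra hm3'
    have hm3 : 3 ≤ m := by omega
    obtain ⟨a, rfl⟩ : ∃ a, m = a + 3 := ⟨m - 3, by omega⟩
    -- position m-1 = a+2
    have f1 : i (a + 3) < i (a + 2) := hdec (a + 2) (by omega) (by omega)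
    have f2 : i (a + 2) ≤ i (a + 3) + k := (hstep (a + 2) (by omega) (by omega)).2
    have f3 : i (a + 2 + r) < i (a + 3 + r) := by
      have := hinc (a + 2 + r) (by omega) (by omega)
      have e : a + 2 + r + 1 = a + 3 + r := by omega
      rwa [e] at this
    have f4 : i (a + 3 + r) ≤ i (a + 2 + r) + k := by
      have := (hstep (a + 2 + r) (by omega) (by omega)).1
      have e : a + 2 + r + 1 = a + 3 + r := by omega
      rwa [e] at this
    have hb2 := hbnd (a + 2) (by omega) (by omega)
    have hb2r := hbnd (a + 2 + r) (by omega) (by omega)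
    have hs2 := hrep (a + 2) (by omega) (by omega)
    have heq1 : i (a + 2) = i (a + 2 + r) := by
      rcases snc_eq k _ _ hb2.1 hb2.2 hb2r.1 hb2r.2 hs2 with h | h | h <;> omega
    -- position m-2 = a+1
    have g1 : i (a + 2) < i (a + 1) := hdec (a + 1) (by omega) (by omega)
    have g2 : i (a + 1) ≤ i (a + 2) + k := (hstep (a + 1) (by omega) (by omega)).2
    have g3 : i (a + 1 + r) < i (a + 2 + r) := by
      have := hinc (a + 1 + r) (by omega) (by omega)
      have e : a + 1 + r + 1 = a + 2 + r := by omega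
      rwa [e] at this
    have g4 : i (a + 3) < i (a + 1 + r) := by
      have := L2 (r - 3) (a + 3) le_rfl (by omega)
      have e : a + 3 + (r - 3) + 1 = a + 1 + r := by omega
      rwa [e] at this
    have hb3 := hbnd (a + 1) (by omega) (by omega)
    have hb3r := hbnd (a + 1 + r) (by omega) (by omega)
    have hs3 := hrep (a + 1) (by omega) (by omega)
    rcases snc_eq k _ _ hb3.1 hb3.2 hb3r.1 hb3r.2 hs3 with h | h | h <;> omega
  · -- r < m
    exfalso
    by_cases hm2r : m = 2 * r
    · have hs1 := hrep 1 le_rfl hr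
      have hlt1 : i (1 + r) < i 1 := by
        have := L1 (r - 1) 1 le_rfl (by omega)
        have e : 1 + (r - 1) + 1 = 1 + r := by omega
        rwa [e] at this
      have hb1 := hbnd 1 le_rfl (by omega)
      have hb1r := hbnd (1 + r) (by omega) (by omega)
      have hA1 : i 1 = i (1 + r) + 2 * k := by
        rcases snc_eq k _ _ hb1.1 hb1.2 hb1r.1 hb1r.2 hs1 with h | h | h <;> omega
      have hsr := hrep r hr le_rfl
      have hltr : i (r + r) < i r := by
        have := L1 (r - 1) r hr (by omega)
        have e : r + (r - 1) + 1 = r + r := by omega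
        rwa [e] at this
      have hbr := hbnd r hr (by omega)
      have hbrr := hbnd (r + r) (by omega) (by omega)
      have hAr : i r = i (r + r) + 2 * k := by
        rcases snc_eq k _ _ hbr.1 hbr.2 hbrr.1 hbrr.2 hsr with h | h | h <;> omega
      have hst : i r ≤ i (r + 1) + k := (hstep r hr (by omega)).2
      have e : r + 1 = 1 + r := by omega
      rw [e] at hst
      omega
    · -- r < m < 2r
      obtain ⟨b, rfl⟩ : ∃ b, m = b + r := ⟨m - r, by omega⟩
      have hb1 : 1 ≤ b := by omega
      have hbr : b < r := by omega
      have hltb : i (b + r) < i b := by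
        have := L1 (r - 1) b hb1 (by omega)
        have e : b + (r - 1) + 1 = b + r := by omega
        rwa [e] at this
      have hbb := hbnd b (by omega) (by omega)
      have hbbr := hbnd (b + r) (by omega) (by omega)
      have hsb := hrep b hb1 (by omega)
      have hAb : i b = i (b + r) + 2 * k := by
        rcases snc_eq k _ _ hbb.1 hbb.2 hbbr.1 hbbr.2 hsb with h | h | h <;> omega
      have hs2 := hrep (b + 1) (by omega) (by omega)
      have e : b + 1 + r = b + r + 1 := by omega
      rw [e] at hs2
      have q1 : i (b + 1) < i b := hdec b hb1 (by omega)
      have q2 : i b ≤ i (b + 1) + k := (hstep b hb1 (by omega)).2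
      have q3 : i (b + r) < i (b + r + 1) := hinc (b + r) le_rfl (by omega)
      have q4 : i (b + r + 1) < i (b + r) + k := hgap (by omega)
      have hc1 := hbnd (b + 1) (by omega) (by omega)
      have hc2 := hbnd (b + r + 1) (by omega) (by omega)
      rcases snc_eq k _ _ hc1.1 hc1.2 hc2.1 hc2.2 hs2 with h | h | h <;> omega
end

section
/- An infinite sequence S is k-special if and only if the edge-coloring of the infinite k-ary tree T_k derived from S is nonrepetitive. -/
/-- The infinite `k`-ary tree: vertices are finite words over `Fin k` (the root is `[]`,
and the children of `v`, in left-to-right order, are `j :: v` for `j : Fin k`). -/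
def kTree (k : ℕ) : SimpleGraph (List (Fin k)) :=
  SimpleGraph.fromRel (fun u v => ∃ j : Fin k, u = j :: v)

/-- The (1-based) position in the defining sequence of the color of the edge joining a
non-root vertex to its parent: the edges from the root get positions `1, …, k` left to
right, and if the edge from `v` to its parent has position `i`, then the edges to the
children of `v` get positions `i + 1, …, i + k` left to right. -/
def edgeIdx {k : ℕ} : List (Fin k) → ℕ
  | [] => 0
  | j :: v => edgeIdx v + (j : ℕ) + 1

/-- The edge-coloring of the infinite `k`-ary tree derived from the 1-indexed sequence `S`. -/
def derivedColoring (k : ℕ) (S : ℕ → ℕ) : Sym2 (List (Fin k)) → ℕ :=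
  Sym2.lift ⟨fun u v =>
    if v.length < u.length then S (edgeIdx u)
    else if u.length < v.length then S (edgeIdx v) else 0, by
      intro u v
      rcases lt_trichotomy u.length v.length with h | h | h <;>
        simp [h, lt_asymm, lt_irrefl]⟩

/-! ### Auxiliary lemmas -/

lemma kTree_adj {k : ℕ} {u v : List (Fin k)} :
    (kTree k).Adj u v ↔ (∃ j : Fin k, u = j :: v) ∨ (∃ j : Fin k, v = j :: u) := by
  constructor
  · rintro h
    rw [kTree, SimpleGraph.fromRel_adj] at h
    exact h.2
  · rintro (⟨j, rfl⟩ | ⟨j, rfl⟩) <;> rw [kTree, SimpleGraph.fromRel_adj]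
    · exact ⟨by simp, Or.inl ⟨j, rfl⟩⟩
    · exact ⟨by simp [Ne, eq_comm], Or.inr ⟨j, rfl⟩⟩

lemma color_up {k : ℕ} (S : ℕ → ℕ) (j : Fin k) (v : List (Fin k)) :
    derivedColoring k S s(j :: v, v) = S (edgeIdx (j :: v)) := by
  simp [derivedColoring]

lemma color_down {k : ℕ} (S : ℕ → ℕ) (j : Fin k) (v : List (Fin k)) :
    derivedColoring k S s(v, j :: v) = S (edgeIdx (j :: v)) := by
  simp [derivedColoring]

lemma walk_colors {V : Type*} {G : SimpleGraph V} (c : Sym2 V → ℕ) :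
    ∀ {u v : V} (p : G.Walk u v),
      p.edges.map c = (p.support.zip p.support.tail).map (fun ab => c s(ab.1, ab.2)) := by
  intro u v p
  induction p with
  | nil => simp
  | cons h q ih =>
      rename_i a b w
      rw [SimpleGraph.Walk.edges_cons, SimpleGraph.Walk.support_cons]
      rw [q.support_eq_cons]
      simp only [List.map_cons, List.tail_cons, List.zip_cons_cons]
      rw [← q.support_eq_cons, ih]

/-- fully decreasing case -/
lemma bad_dec (k r : ℕ) (S I : ℕ → ℕ) (hr : 1 ≤ r)
    (hrep : ∀ j, 1 ≤ j → j ≤ r → S (I j) = S (I (j+r)))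
    (hpos : ∀ j, 1 ≤ j → j ≤ 2*r → 1 ≤ I j)
    (hdec : ∀ j, 1 ≤ j → j < 2*r → I (j+1) < I j ∧ I j ≤ I (j+1) + k) :
    ∃ r' m i, KBadIdx k S r' m i ∧ ∀ j, 1 ≤ j → j ≤ 2*r' → 1 ≤ i j := by
  refine ⟨r, 2*r, I, ⟨hr, by omega, le_rfl, hrep,
    fun j h1 h2 => (hdec j h1 h2).1, fun j h1 h2 => by omega,
    fun j h1 h2 => by have := hdec j h1 h2; omega, fun h => by omega⟩, hpos⟩

/-- valley case: 2 ≤ p < 2r, decreasing to p, increasing after, turn gap < k -/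
lemma bad_valley (k r p : ℕ) (S I : ℕ → ℕ) (hr : 1 ≤ r) (hp2 : 2 ≤ p) (hplt : p < 2*r)
    (hrep : ∀ j, 1 ≤ j → j ≤ r → S (I j) = S (I (j+r)))
    (hpos : ∀ j, 1 ≤ j → j ≤ 2*r → 1 ≤ I j)
    (hdec : ∀ j, 1 ≤ j → j < p → I (j+1) < I j ∧ I j ≤ I (j+1) + k)
    (hinc : ∀ j, p ≤ j → j < 2*r → I j < I (j+1) ∧ I (j+1) ≤ I j + k)
    (hturn : I (p+1) < I p + k) :
    ∃ r' m i, KBadIdx k S r' m i ∧ ∀ j, 1 ≤ j → j ≤ 2*r' → 1 ≤ i j := by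
  refine ⟨r, p, I, ⟨hr, by omega, by omega, hrep,
    fun j h1 h2 => (hdec j h1 h2).1, fun j h1 h2 => (hinc j h1 h2).1,
    fun j h1 h2 => ?_, fun h => hturn⟩, hpos⟩
  rcases lt_or_ge j p with h | h
  · have := hdec j h1 h; omega
  · have := hinc j h h2; omega

/-- main arithmetic lemma -/
lemma bad_of_valley (k r p : ℕ) (S I : ℕ → ℕ) (hr : 1 ≤ r) (hp : p ≤ 2*r)
    (hrep : ∀ j, 1 ≤ j → j ≤ r → S (I j) = S (I (j+r)))
    (hpos : ∀ j, 1 ≤ j → j ≤ 2*r → 1 ≤ I j)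
    (hup : ∀ j, 1 ≤ j → j + 1 ≤ p → I (j+1) < I j ∧ I j ≤ I (j+1) + k)
    (hdown : ∀ j, p + 1 ≤ j → j + 1 ≤ 2*r → I j < I (j+1) ∧ I (j+1) ≤ I j + k)
    (hturn : 1 ≤ p → p < 2*r → I p ≠ I (p+1) ∧ I p < I (p+1) + k ∧ I (p+1) < I p + k) :
    ∃ r' m i, KBadIdx k S r' m i ∧ ∀ j, 1 ≤ j → j ≤ 2*r' → 1 ≤ i j := by
  set I' : ℕ → ℕ := fun j => I (2*r+1-j) with hI'
  have hrep' : ∀ j, 1 ≤ j → j ≤ r → S (I' j) = S (I' (j+r)) := by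
    intro j h1 h2
    simp only [hI']
    rw [show 2*r+1-j = (r+1-j)+r by omega, show 2*r+1-(j+r) = r+1-j by omega]
    exact (hrep (r+1-j) (by omega) (by omega)).symm
  have hpos' : ∀ j, 1 ≤ j → j ≤ 2*r → 1 ≤ I' j := by
    intro j h1 h2; exact hpos (2*r+1-j) (by omega) (by omega)
  rcases eq_or_lt_of_le hp with hpe | hplt
  · exact bad_dec k r S I hr hrep hpos (fun j h1 h2 => hup j h1 (by omega))
  rcases Nat.eq_zero_or_pos p with hp0 | hp1
  · refine bad_dec k r S I' hr hrep' hpos' ?_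
    intro j h1 h2
    have := hdown (2*r-j) (by omega) (by omega)
    simp only [hI']
    rw [show 2*r+1-(j+1) = 2*r-j by omega, show 2*r+1-j = (2*r-j)+1 by omega]
    omega
  obtain ⟨hne, hg1, hg2⟩ := hturn hp1 hplt
  rcases lt_or_ge (I p) (I (p+1)) with hlt | hge
  · rcases lt_or_ge 1 p with hpp | hpp
    · refine bad_valley k r p S I hr (by omega) hplt hrep hpos
        (fun j h1 h2 => hup j h1 (by omega)) ?_ hg2
      intro j h1 h2
      rcases eq_or_lt_of_le h1 with he | hl
      · subst he; exact ⟨hlt, by omega⟩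
      · exact hdown j hl h2
    · have hp1' : p = 1 := by omega
      refine bad_dec k r S I' hr hrep' hpos' ?_
      intro j h1 h2
      simp only [hI']
      rw [show 2*r+1-(j+1) = 2*r-j by omega, show 2*r+1-j = (2*r-j)+1 by omega]
      rcases eq_or_lt_of_le (show p ≤ 2*r-j by omega) with he | hl
      · rw [← he, hp1']; rw [hp1'] at hlt hg1 hg2; exact ⟨hlt, by omega⟩
      · exact hdown (2*r-j) (by omega) (by omega)
  · have hgt : I (p+1) < I p := lt_of_le_of_ne hge (Ne.symm hne)
    rcases eq_or_lt_of_le (show p+1 ≤ 2*r by omega) with hpe1 | hplt1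
    · refine bad_dec k r S I hr hrep hpos ?_
      intro j h1 h2
      rcases eq_or_lt_of_le (show j+1 ≤ 2*r by omega) with he | hl
      · have : j = p := by omega
        subst this; exact ⟨hgt, by omega⟩
      · exact hup j h1 (by omega)
    · refine bad_valley k r (2*r-p) S I' hr (by omega) (by omega) hrep' hpos' ?_ ?_ ?_
      · intro j h1 h2
        simp only [hI']
        rw [show 2*r+1-(j+1) = 2*r-j by omega, show 2*r+1-j = (2*r-j)+1 by omega]
        have := hdown (2*r-j) (by omega) (by omega)
        omega
      · intro j h1 h2
        simp only [hI']
        rw [show 2*r+1-(j+1) = 2*r-j by omega, show 2*r+1-j = (2*r-j)+1 by omega]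
        rcases eq_or_lt_of_le (show 2*r-j ≤ p by omega) with he | hl
        · rw [he]; exact ⟨hgt, by omega⟩
        · have := hup (2*r-j) (by omega) (by omega); omega
      · simp only [hI']
        rw [show 2*r+1-(2*r-p+1) = p by omega, show 2*r+1-(2*r-p) = p+1 by omega]
        omega

/-- From a nodup chain in the tree carrying a repetition, extract a bad index sequence. -/
lemma chain_to_bad (k : ℕ) (S : ℕ → ℕ) (L : List (List (Fin k)))
    (hch : List.Chain' (kTree k).Adj L) (hnd : L.Nodup) (w : List ℕ) (hw : w ≠ [])
    (hweq : (L.zip L.tail).map (fun ab => derivedColoring k S s(ab.1, ab.2)) = w ++ w) :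
    ∃ r' m i, KBadIdx k S r' m i ∧ ∀ j, 1 ≤ j → j ≤ 2*r' → 1 ≤ i j := by
  classical
  have hr : 1 ≤ w.length := List.length_pos_iff.mpr hw
  set r := w.length with hrdef
  have hL : L.length = 2*r + 1 := by
    have := congrArg List.length hweq
    simp only [List.length_map, List.length_zip, List.length_tail, List.length_append] at this
    omega
  set n := 2*r with hndef
  set x : ℕ → List (Fin k) := fun t => L.getD t [] with hxdef
  have hx : ∀ (t : ℕ) (ht : t < L.length), x t = L[t]'ht := by
    intro t ht; exact L.getD_eq_getElem [] ht
  have hadj : ∀ t, t + 1 < L.length →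
      ((∃ j : Fin k, x t = j :: x (t+1)) ∨ (∃ j : Fin k, x (t+1) = j :: x t)) := by
    intro t ht
    have h := List.isChain_iff_getElem.mp hch t (by omega)
    rw [← hx t (by omega), ← hx (t+1) ht] at h
    exact kTree_adj.mp h
  have hinj : ∀ s t, s < L.length → t < L.length → x s = x t → s = t := by
    intro s t hs ht he
    rw [hx s hs, hx t ht] at he
    exact (List.Nodup.getElem_inj_iff hnd).mp he
  have hpers : ∀ t, t + 2 < L.length → (∃ j : Fin k, x (t+1) = j :: x t) →
      (∃ j : Fin k, x (t+2) = j :: x (t+1)) := by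
    rintro t ht ⟨j, hj⟩
    rcases hadj (t+1) (by omega) with ⟨j', hj'⟩ | h2
    · exfalso
      rw [hj] at hj'
      have he : x (t+2) = x t := by
        have := (List.cons.injEq j (x t) j' (x (t+2))).mp hj'
        exact this.2.symm
      have := hinj (t+2) t (by omega) (by omega) he
      omega
    · exact h2
  have hex : ∃ t, (L.length ≤ t + 1 ∨ ∃ j : Fin k, x (t+1) = j :: x t) :=
    ⟨n, Or.inl (by omega)⟩
  set m := Nat.find hex with hmdef
  have hmspec := Nat.find_spec hex
  have hmn : m ≤ n := Nat.find_min' hex (Or.inl (le_of_eq hL))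
  have hup : ∀ t, t < m → ∃ j : Fin k, x t = j :: x (t+1) := by
    intro t ht
    have hnP := Nat.find_min hex ht
    push_neg at hnP
    rcases hadj t (by omega) with h | h
    · exact h
    · obtain ⟨j, hj⟩ := h
      exact absurd hj (hnP.2 j)
  have hdown : ∀ t, m ≤ t → t + 1 < L.length → ∃ j : Fin k, x (t+1) = j :: x t := by
    have key : ∀ d, m + d + 1 < L.length → ∃ j : Fin k, x (m+d+1) = j :: x (m+d) := by
      intro d
      induction d with
      | zero =>
          intro hd
          rcases hmspec with h | h
          · omega
          · simpa using h
      | succ d ih =>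
          intro hd
          have := hpers (m+d) (by omega) (ih (by omega))
          obtain ⟨j, hj⟩ := this
          exact ⟨j, by rw [show m+(d+1)+1 = m+d+2 by omega, show m+(d+1) = m+d+1 by omega]; exact hj⟩
    intro t ht htl
    have := key (t - m) (by omega)
    rw [show m + (t-m) = t by omega] at this
    exact this
  set I : ℕ → ℕ := fun j => if j ≤ m then edgeIdx (x (j-1)) else edgeIdx (x j) with hIdef
  have hcol : ∀ t, t + 1 ≤ n → derivedColoring k S s(x t, x (t+1)) = S (I (t+1)) := by
    intro t ht
    by_cases htm : t + 1 ≤ m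
    · obtain ⟨jl, hjl⟩ := hup t (by omega)
      rw [hjl, color_up S jl (x (t+1)), ← hjl]
      simp [hIdef, htm]
    · obtain ⟨jl, hjl⟩ := hdown t (by omega) (by omega)
      rw [hjl, color_down S jl (x t), ← hjl]
      simp [hIdef, htm]
  have hSval : ∀ t, t < n → S (I (t+1)) = (w ++ w).getD t 0 := by
    intro t ht
    rw [← hweq]
    have hlt : t < (List.map (fun ab => derivedColoring k S s(ab.1, ab.2)) (L.zip L.tail)).length := by
      simp only [List.length_map, List.length_zip, List.length_tail]; omega
    rw [List.getD_eq_getElem _ _ hlt]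
    rw [List.getElem_map, List.getElem_zip]
    dsimp only
    rw [List.getElem_tail]
    have hc := hcol t (by omega)
    rw [hx t (by omega), hx (t+1) (by omega)] at hc
    exact hc.symm
  have hSval' : ∀ j, 1 ≤ j → j ≤ n → S (I j) = (w ++ w).getD (j-1) 0 := by
    intro j h1 h2
    have := hSval (j-1) (by omega)
    rw [show j-1+1 = j by omega] at this
    exact this
  have hrepI : ∀ j, 1 ≤ j → j ≤ r → S (I j) = S (I (j+r)) := by
    intro j h1 h2
    rw [hSval' j h1 (by omega), hSval' (j+r) (by omega) (by omega)]
    have e1 : j - 1 < (w ++ w).length := by simp; omega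
    have e2 : j + r - 1 < (w ++ w).length := by simp; omega
    rw [List.getD_eq_getElem _ _ e1, List.getD_eq_getElem _ _ e2]
    rw [List.getElem_append_left (by omega : j - 1 < w.length),
      List.getElem_append_right (by omega : w.length ≤ j + r - 1)]
    congr 1
    omega
  have hposI : ∀ j, 1 ≤ j → j ≤ n → 1 ≤ I j := by
    intro j h1 h2
    by_cases hjm : j ≤ m
    · obtain ⟨jl, hjl⟩ := hup (j-1) (by omega)
      simp only [hIdef, if_pos hjm, hjl, edgeIdx]
      omega
    · obtain ⟨jl, hjl⟩ := hdown (j-1) (by omega) (by omega)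
      rw [show j-1+1 = j by omega] at hjl
      simp only [hIdef, if_neg hjm, hjl, edgeIdx]
      omega
  have hupI : ∀ j, 1 ≤ j → j + 1 ≤ m → I (j+1) < I j ∧ I j ≤ I (j+1) + k := by
    intro j h1 h2
    obtain ⟨jl, hjl⟩ := hup (j-1) (by omega)
    rw [show j-1+1 = j by omega] at hjl
    have hk := jl.isLt
    simp only [hIdef, if_pos (show j ≤ m by omega), if_pos h2, show j+1-1 = j by omega, hjl, edgeIdx]
    omega
  have hdownI : ∀ j, m + 1 ≤ j → j + 1 ≤ n → I j < I (j+1) ∧ I (j+1) ≤ I j + k := by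
    intro j h1 h2
    obtain ⟨jl, hjl⟩ := hdown j (by omega) (by omega)
    have hk := jl.isLt
    simp only [hIdef, if_neg (show ¬ j ≤ m by omega), if_neg (show ¬ j + 1 ≤ m by omega), hjl,
      edgeIdx]
    omega
  have hturnI : 1 ≤ m → m < n → I m ≠ I (m+1) ∧ I m < I (m+1) + k ∧ I (m+1) < I m + k := by
    intro h1 h2
    obtain ⟨j1, hj1⟩ := hup (m-1) (by omega)
    rw [show m-1+1 = m by omega] at hj1
    obtain ⟨j2, hj2⟩ := hdown m (by omega) (by omega)
    have hk1 := j1.isLt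
    have hk2 := j2.isLt
    have hne : (j1 : ℕ) ≠ (j2 : ℕ) := by
      intro he
      have he2 : j1 = j2 := Fin.ext he
      rw [he2] at hj1
      have he3 : x (m-1) = x (m+1) := by rw [hj1, hj2]
      have := hinj (m-1) (m+1) (by omega) (by omega) he3
      omega
    simp only [hIdef, if_pos (le_refl m), if_neg (show ¬ m + 1 ≤ m by omega), hj1, hj2, edgeIdx]
    omega
  exact bad_of_valley k r m S I hr (by omega) hrepI hposI hupI hdownI hturnI

def chainWalk {k : ℕ} : (ls : List (Fin k)) → (v : List (Fin k)) → (kTree k).Walk (ls ++ v) v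
  | [], _ => SimpleGraph.Walk.nil
  | j :: ls, v =>
      SimpleGraph.Walk.cons (by rw [kTree_adj]; exact Or.inl ⟨j, rfl⟩) (chainWalk ls v)

lemma chainWalk_support {k : ℕ} (ls v : List (Fin k)) :
    (chainWalk ls v).support = (List.range (ls.length + 1)).map (fun t => ls.drop t ++ v) := by
  induction ls with
  | nil => simp [chainWalk]
  | cons j ls ih =>
      show ((chainWalk (j::ls) v)).support = _
      rw [chainWalk]
      rw [SimpleGraph.Walk.support_cons, ih]
      simp only [List.length_cons]
      rw [show List.range (ls.length+1+1) = 0 :: (List.range (ls.length+1)).map Nat.succ from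
        List.range_succ_eq_map]
      simp [List.map_map, Function.comp, List.drop_succ_cons]

lemma chainWalk_colors {k : ℕ} (S : ℕ → ℕ) (ls v : List (Fin k)) :
    (chainWalk ls v).edges.map (derivedColoring k S) =
      (List.range ls.length).map (fun t => S (edgeIdx (ls.drop t ++ v))) := by
  induction ls with
  | nil => simp [chainWalk]
  | cons j ls ih =>
      rw [chainWalk]
      rw [SimpleGraph.Walk.edges_cons, List.map_cons, ih]
      simp only [List.length_cons]
      rw [show List.range (ls.length+1) = 0 :: (List.range ls.length).map Nat.succ from
        List.range_succ_eq_map]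
      have hc : derivedColoring k S s(j :: ls ++ v, ls ++ v) = S (edgeIdx ((j :: ls) ++ v)) :=
        color_up S j (ls ++ v)
      rw [List.map_cons, hc]
      simp [List.map_map, Function.comp, List.drop_succ_cons, edgeIdx]

lemma chainWalk_isPath {k : ℕ} (ls v : List (Fin k)) : (chainWalk ls v).IsPath := by
  induction ls with
  | nil => exact SimpleGraph.Walk.IsPath.nil
  | cons j ls ih =>
      rw [chainWalk, SimpleGraph.Walk.cons_isPath_iff]
      refine ⟨ih, ?_⟩
      intro hmem
      rw [chainWalk_support] at hmem
      simp only [List.mem_map, List.mem_range] at hmem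
      obtain ⟨t, _, he⟩ := hmem
      have := congrArg List.length he
      simp only [List.length_append, List.length_drop, List.length_cons] at this
      have := (List.length_drop (i := t) (l := ls)) ▸ this
      omega

lemma edgeIdx_replicate {k : ℕ} (hk : 1 ≤ k) (n : ℕ) :
    edgeIdx (List.replicate n (⟨0, hk⟩ : Fin k)) = n := by
  induction n with
  | zero => rfl
  | succ n ih => simp [List.replicate_succ, edgeIdx, ih]

lemma bad_to_rep (k : ℕ) (hk : 1 ≤ k) (S : ℕ → ℕ) (r m : ℕ) (i : ℕ → ℕ)
    (hbad : KBadIdx k S r m i) (hpos : ∀ j, 1 ≤ j → j ≤ 2*r → 1 ≤ i j) :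
    ∃ (u v : List (Fin k)) (P : (kTree k).Walk u v), P.IsPath ∧
      IsRepetition (P.edges.map (derivedColoring k S)) := by
  obtain ⟨hr, hm1, hm2, hrep, hdec, hinc, hgap, hturn⟩ := hbad
  set z : Fin k := ⟨0, hk⟩ with hz
  set a : List (Fin k) := List.replicate (i m - 1) z with ha
  have ea : edgeIdx a = i m - 1 := edgeIdx_replicate hk _
  set fin : ℕ → Fin k := fun t => ⟨t % k, Nat.mod_lt _ hk⟩ with hfin
  set lu : ℕ → ℕ := fun t => if t = m then 0 else i t - i (t+1) - 1 with hlu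
  set ld : ℕ → ℕ := fun t => if t = m+1 then i (m+1) - i m else i t - i (t-1) - 1 with hld
  set n2 := 2*r - m with hn2
  set ls1 : List (Fin k) := (List.range m).map (fun t => fin (lu (t+1))) with hls1
  set ls2 : List (Fin k) := (List.range n2).map (fun s => fin (ld (2*r - s))) with hls2
  have hlen1 : ls1.length = m := by simp [hls1]
  have hlen2 : ls2.length = n2 := by simp [hls2]
  have hget1 : ∀ t (ht : t < m), ls1[t]'(by omega) = fin (lu (t+1)) := by
    intro t ht; simp [hls1]
  have hget2 : ∀ s (hs : s < n2), ls2[s]'(by omega) = fin (ld (2*r - s)) := by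
    intro s hs; simp [hls2]
  have hlub : ∀ t, 1 ≤ t → t ≤ m → lu t < k := by
    intro t h1 h2
    simp only [hlu]
    split
    · omega
    · have hg := hgap t h1 (by omega)
      have hd := hdec t h1 (by omega)
      omega
  have hldb : ∀ t, m+1 ≤ t → t ≤ 2*r → ld t < k := by
    intro t h1 h2
    simp only [hld]
    split
    · have h3 := hturn (by omega)
      have h4 := hinc m (le_refl m) (by omega)
      omega
    · have hg := hgap (t-1) (by omega) (by omega)
      have hi := hinc (t-1) (by omega) (by omega)
      rw [show t-1+1 = t by omega] at hg hi
      omega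
  have hfv : ∀ t, t < k → ((fin t : Fin k) : ℕ) = t := by
    intro t ht; simp [hfin, Nat.mod_eq_of_lt ht]
  -- up chain indices
  have hup1 : ∀ t, t < m → edgeIdx (ls1.drop t ++ a) = i (t+1) := by
    have key : ∀ d, d ≤ m → edgeIdx (ls1.drop (m - d) ++ a) =
        (if d = 0 then i m - 1 else i (m - d + 1)) := by
      intro d
      induction d with
      | zero =>
          intro _
          simp only [Nat.sub_zero]
          rw [show ls1.drop m = [] from by rw [← hlen1]; simp]
          simpa using ea
      | succ d ih =>
          intro hd
          have hdm : m - (d+1) < ls1.length := by omega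
          rw [List.drop_eq_getElem_cons hdm, hget1 (m - (d+1)) (by omega)]
          have e1 : m - (d+1) + 1 = m - d := by omega
          rw [e1]
          simp only [List.cons_append, List.append_eq, edgeIdx]
          rw [ih (by omega), hfv _ (hlub (m-d) (by omega) (by omega))]
          simp only [hlu]
          by_cases hd0 : d = 0
          · subst hd0
            have := hpos m (by omega) (by omega)
            simp only [Nat.sub_zero]
            simp
            omega
          · rw [if_neg (show ¬ (m - d = m) by omega), if_neg hd0,
              if_neg (show ¬ (d+1 = 0) by omega)]
            have := hdec (m-d) (by omega) (by omega)
            omega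
    intro t ht
    have h := key (m - t) (by omega)
    rw [show m - (m - t) = t by omega, if_neg (by omega)] at h
    exact h
  -- down chain indices
  have hdown1 : ∀ s, s < n2 → edgeIdx (ls2.drop s ++ a) = i (2*r - s) := by
    have key : ∀ d, d ≤ n2 → edgeIdx (ls2.drop (n2 - d) ++ a) =
        (if d = 0 then i m - 1 else i (m + d)) := by
      intro d
      induction d with
      | zero =>
          intro _
          simp only [Nat.sub_zero]
          rw [show ls2.drop n2 = [] from by rw [← hlen2]; simp]
          simpa using ea
      | succ d ih =>
          intro hd
          have hdm : n2 - (d+1) < ls2.length := by omega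
          rw [List.drop_eq_getElem_cons hdm, hget2 (n2 - (d+1)) (by omega)]
          have e1 : n2 - (d+1) + 1 = n2 - d := by omega
          have e2 : 2*r - (n2 - (d+1)) = m + d + 1 := by omega
          rw [e1, e2]
          simp only [List.cons_append, List.append_eq, edgeIdx]
          rw [ih (by omega), hfv _ (hldb (m+d+1) (by omega) (by omega))]
          simp only [hld]
          by_cases hd0 : d = 0
          · subst hd0
            have h5 := hpos m (by omega) (by omega)
            have h6 := hinc m (le_refl m) (by omega)
            simp only [Nat.add_zero]
            simp
            omega
          · rw [if_neg (show ¬ (m+d+1 = m+1) by omega), if_neg hd0,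
              if_neg (show ¬ (d+1 = 0) by omega)]
            have := hinc (m+d) (by omega) (by omega)
            rw [show m+d+1-1 = m+d by omega, show m + (d+1) = m+d+1 by omega]
            omega
    intro s hs
    have h := key (n2 - s) (by omega)
    rw [show n2 - (n2 - s) = s by omega, if_neg (by omega), show m + (n2-s) = 2*r - s by omega] at h
    exact h
  -- the walk
  set P := (chainWalk ls1 a).append (chainWalk ls2 a).reverse with hP
  refine ⟨ls1 ++ a, ls2 ++ a, P, ?_, ?_⟩
  · -- IsPath
    rw [SimpleGraph.Walk.isPath_def, hP, SimpleGraph.Walk.support_append,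
      SimpleGraph.Walk.support_reverse, chainWalk_support, chainWalk_support]
    rw [hlen1, hlen2]
    have hrs : List.range (n2+1) = List.range n2 ++ [n2] := by rw [List.range_succ]
    rw [hrs]
    rw [List.map_append, List.reverse_append]
    have hdrop2 : ls2.drop n2 ++ a = a := by
      rw [show ls2.drop n2 = [] from by rw [← hlen2]; simp]; rfl
    simp only [List.map_cons, List.map_nil, List.reverse_cons, List.reverse_nil,
      List.nil_append, hdrop2, List.cons_append, List.tail_cons]
    apply List.Nodup.append
    · apply List.Nodup.map_on ?_ List.nodup_range
      intro t1 ht1 t2 ht2 he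
      rw [List.mem_range] at ht1 ht2
      have := congrArg List.length he
      simp only [List.length_append, List.length_drop, hlen1] at this
      omega
    · rw [List.nodup_reverse]
      apply List.Nodup.map_on ?_ List.nodup_range
      intro t1 ht1 t2 ht2 he
      rw [List.mem_range] at ht1 ht2
      have := congrArg List.length he
      simp only [List.length_append, List.length_drop, hlen2] at this
      omega
    · intro y hy1 hy2
      rw [List.mem_map] at hy1
      obtain ⟨t, ht, hty⟩ := hy1
      rw [List.mem_range] at ht
      rw [List.mem_reverse, List.mem_map] at hy2
      obtain ⟨s, hs, hsy⟩ := hy2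
      rw [List.mem_range] at hs
      rw [← hty] at hsy
      have hyz : ls1.drop t = ls2.drop s := List.append_cancel_right hsy.symm
      have hl : m - t = n2 - s := by
        have := congrArg List.length hyz
        simpa [List.length_drop, hlen1, hlen2] using this
      have htm : t < m := by omega
      have hmr : m < 2*r := by omega
      have hgd := List.getElem_of_eq hyz (show m - t - 1 < (ls1.drop t).length by
        simp [List.length_drop, hlen1]; omega)
      rw [List.getElem_drop, List.getElem_drop] at hgd
      rw [hget1 _ (by omega), hget2 _ (by omega)] at hgd
      rw [show t + (m - t - 1) + 1 = m by omega] at hgd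
      rw [show 2*r - (s + (m - t - 1)) = m + 1 by omega] at hgd
      have hv := congrArg (fun x : Fin k => (x : ℕ)) hgd
      simp only [hfin] at hv
      have b1 : lu m = 0 := by simp [hlu]
      have b2 : ld (m+1) = i (m+1) - i m := by simp [hld]
      have b3 := hldb (m+1) (by omega) (by omega)
      have b4 := hinc m (le_refl m) hmr
      have b5 := hlub m (by omega) (by omega)
      rw [Nat.mod_eq_of_lt b5, Nat.mod_eq_of_lt b3] at hv
      omega
  · -- repetition
    refine ⟨(List.range r).map (fun t => S (i (t+1))), by simp; omega, ?_⟩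
    rw [hP, SimpleGraph.Walk.edges_append, SimpleGraph.Walk.edges_reverse, List.map_append,
      List.map_reverse, chainWalk_colors, chainWalk_colors, hlen1, hlen2]
    apply List.ext_getElem
    · simp; omega
    · intro t h1 h2
      simp only [List.length_append, List.length_map, List.length_reverse, List.length_range] at h1 h2
      by_cases htm : t < m
      · rw [List.getElem_append_left (by simp; omega)]
        rw [List.getElem_map, List.getElem_range, hup1 t htm]
        by_cases htr : t < r
        · rw [List.getElem_append_left (by simp; omega), List.getElem_map, List.getElem_range]
        · rw [List.getElem_append_right (by simp; omega), List.getElem_map, List.getElem_range]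
          simp only [List.length_map, List.length_range]
          have := hrep (t - r + 1) (by omega) (by omega)
          rw [show t-r+1+r = t+1 by omega] at this
          rw [← this, show t - r + 1 = t - r + 1 by rfl]
      · rw [List.getElem_append_right (by simp; omega)]
        rw [List.getElem_reverse, List.getElem_map, List.getElem_range]
        simp only [List.length_map, List.length_range]
        rw [hdown1 _ (by omega)]
        rw [show 2*r - (n2 - 1 - (t - m)) = t + 1 by omega]
        by_cases htr : t < r
        · rw [List.getElem_append_left (by simp; omega), List.getElem_map, List.getElem_range]
        · rw [List.getElem_append_right (by simp; omega), List.getElem_map, List.getElem_range]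
          simp only [List.length_map, List.length_range]
          have := hrep (t - r + 1) (by omega) (by omega)
          rw [show t-r+1+r = t+1 by omega] at this
          rw [← this]




/-- An infinite sequence `S` is `k`-special if and only if the edge-coloring of the
infinite `k`-ary tree derived from `S` is nonrepetitive. -/
theorem stmt12 (k : ℕ) (hk : 1 ≤ k) (S : ℕ → ℕ) :
    KSpecialInf k S ↔ NonrepEdgeColoring (kTree k) (derivedColoring k S) := by
  constructor
  · intro hS u v P hPath hrep
    obtain ⟨w, hw, hweq⟩ := hrep
    apply hS
    apply chain_to_bad k S P.support P.isChain_adj_support hPath.support_nodup w hw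
    rw [← walk_colors (derivedColoring k S) P]
    exact hweq
  · intro hN
    rintro ⟨r, m, i, hbad, hp⟩
    obtain ⟨u, v, P, hPath, hrep⟩ := bad_to_rep k hk S r m i hbad hp
    exact hN u v P hPath hrep
end

section
/- Let S be an infinite square-free sequence over {a, b, c} containing neither aba nor bab as a factor. Form S' by replacing each occurrence of c with the block c^{(0)}, c^{(1)}, ..., c^{(k)} (k+1 symbols) and each occurrence of a (resp. b) with the block a^{(1)},...,a^{(k)} (resp. b^{(1)},...,b^{(k)}). Then S' is a k-special sequence over 3k + 1 symbols. -/
/-- An infinite 1-indexed sequence is square-free (nonrepetitive) if no contiguous block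
is a repetition. -/
def SeqSquareFree {α : Type*} (S : ℕ → α) : Prop :=
  ¬ ∃ p r : ℕ, 1 ≤ p ∧ 1 ≤ r ∧ ∀ j < r, S (p + j) = S (p + r + j)

/-- An infinite 1-indexed sequence is palindrome-free if no contiguous block of length at
least 2 reads the same forwards and backwards. -/
def SeqPalindromeFree {α : Type*} (S : ℕ → α) : Prop :=
  ¬ ∃ p L : ℕ, 1 ≤ p ∧ 2 ≤ L ∧ ∀ j < L, S (p + j) = S (p + L - 1 - j)

/-- The sequence `S^{(w)}` obtained from the 1-indexed sequence `S` by replacing each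
symbol `t` by the block `t⁽⁰⁾, t⁽¹⁾, …, t⁽ʷ⁻¹⁾` of `w` new symbols (encoded as pairs). -/
def blowup {α : Type*} (w : ℕ) (S : ℕ → α) : ℕ → α × ℕ :=
  fun p => (S ((p - 1) / w + 1), (p - 1) % w)




set_option linter.unusedSectionVars false



namespace St17

/-- block width -/
def W (k : ℕ) (S : ℕ → Fin 3) (m : ℕ) : ℕ := if S m = 2 then k + 1 else k

/-- block index of position p -/
noncomputable def B (len : ℕ → ℕ) (p : ℕ) : ℕ := sInf {m | p ≤ len m}

section

variable {k : ℕ} {S : ℕ → Fin 3} {len : ℕ → ℕ}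

lemma W_ge (m : ℕ) : k ≤ W k S m := by unfold W; split <;> omega

lemma W_le (m : ℕ) : W k S m ≤ k + 1 := by unfold W; split <;> omega

variable (hk : 1 ≤ k) (hlen0 : len 0 = 0)
  (hlen : ∀ m, len (m + 1) = len m + W k S (m + 1))

include hk hlen

lemma len_add (m a : ℕ) : len m + k * a ≤ len (m + a) := by
  induction a with
  | zero => simp
  | succ a ih =>
      have h1 := hlen (m + a)
      have h2 := W_ge (k := k) (S := S) (m + a + 1)
      have h3 : m + (a + 1) = (m + a) + 1 := by omega
      have h4 : k * (a + 1) = k * a + k := by ring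
      rw [h3, h1, h4]
      omega

lemma len_mono {a b : ℕ} (h : a ≤ b) : len a ≤ len b := by
  have := len_add hk hlen a (b - a)
  have h2 : a + (b - a) = b := by omega
  rw [h2] at this; nlinarith

lemma len_succ_le (m : ℕ) : len (m + 1) ≤ len m + k + 1 := by
  have := hlen m; have := W_le (k := k) (S := S) (m + 1); omega

lemma len_succ_ge (m : ℕ) : len m + k ≤ len (m + 1) := by
  have := hlen m; have := W_ge (k := k) (S := S) (m + 1); omega

include hlen0

lemma B_spec {p : ℕ} (hp : 1 ≤ p) :
    len (B len p - 1) < p ∧ p ≤ len (B len p) ∧ 1 ≤ B len p := by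
  have hne : p ∈ {m | p ≤ len m} := by
    have h1 := len_add hk hlen 0 p
    simp only [Set.mem_setOf_eq]
    have h2 : p ≤ k * p := Nat.le_mul_of_pos_left p (by omega)
    simp only [hlen0, Nat.zero_add] at h1
    omega
  have hmem : p ≤ len (B len p) := Nat.sInf_mem (⟨p, hne⟩ : {m | p ≤ len m}.Nonempty)
  have hB1 : 1 ≤ B len p := by
    by_contra h
    have h0 : B len p = 0 := by omega
    rw [h0, hlen0] at hmem; omega
  have hlt : len (B len p - 1) < p := by
    have h5 : B len p - 1 < B len p := by omega
    have : B len p - 1 ∉ {m | p ≤ len m} := Nat.notMem_of_lt_sInf h5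
    simp only [Set.mem_setOf_eq] at this
    omega
  exact ⟨hlt, hmem, hB1⟩

lemma B_mono {p q : ℕ} (hp : 1 ≤ p) (hq : 1 ≤ q) (h : p ≤ q) : B len p ≤ B len q := by
  obtain ⟨h1, h2, h3⟩ := B_spec hk hlen0 hlen hp
  obtain ⟨h4, h5, h6⟩ := B_spec hk hlen0 hlen hq
  by_contra hc
  have : B len q ≤ B len p - 1 := by omega
  have := len_mono hk hlen this
  omega

lemma B_step {p q : ℕ} (hp : 1 ≤ p) (hq : 1 ≤ q) (h : q ≤ p + k) :
    B len q ≤ B len p + 1 := by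
  obtain ⟨h1, h2, h3⟩ := B_spec hk hlen0 hlen hp
  obtain ⟨h4, h5, h6⟩ := B_spec hk hlen0 hlen hq
  by_contra hc
  have hle : B len p + 1 ≤ B len q - 1 := by omega
  have e1 := len_mono hk hlen hle
  have e2 := len_succ_ge hk hlen (B len p)
  omega

variable {S' : ℕ → Fin 3 × ℕ}
  (hS' : ∀ m p, len m < p → p ≤ len (m + 1) →
      S' p = (S (m + 1), if S (m + 1) = 2 then p - len m - 1 else p - len m))

include hS'

lemma S'_val {p : ℕ} (hp : 1 ≤ p) :
    S' p = (S (B len p),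
      if S (B len p) = 2 then p - len (B len p - 1) - 1 else p - len (B len p - 1)) := by
  obtain ⟨h1, h2, h3⟩ := B_spec hk hlen0 hlen (S := S) hp
  have he : B len p - 1 + 1 = B len p := by omega
  have := hS' (B len p - 1) p (by omega) (by rw [he]; exact h2)
  rw [he] at this
  exact this

lemma key {p q : ℕ} (hp : 1 ≤ p) (hq : 1 ≤ q) (h : S' p = S' q) :
    S (B len p) = S (B len q) ∧ p + len (B len q - 1) = q + len (B len p - 1) := by
  obtain ⟨hp1, hp2, hp3⟩ := B_spec hk hlen0 hlen (S := S) hp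
  obtain ⟨hq1, hq2, hq3⟩ := B_spec hk hlen0 hlen (S := S) hq
  rw [S'_val hk hlen0 hlen hS' hp, S'_val hk hlen0 hlen hS' hq] at h
  have hc : S (B len p) = S (B len q) := congrArg Prod.fst h
  refine ⟨hc, ?_⟩
  have ho := congrArg Prod.snd h
  simp only at ho
  rw [← hc] at ho
  by_cases h2 : S (B len p) = 2 <;> simp [h2] at ho <;> omega

/-- equal S'-labels at distinct positions are at least 2k+1 apart -/
lemma labelGap (hsf : SeqSquareFree S)
    (haba : ∀ p, 1 ≤ p → ¬ (S p = 0 ∧ S (p + 1) = 1 ∧ S (p + 2) = 0))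
    (hbab : ∀ p, 1 ≤ p → ¬ (S p = 1 ∧ S (p + 1) = 0 ∧ S (p + 2) = 1))
    {p q : ℕ} (hp : 1 ≤ p) (hq : 1 ≤ q) (hpq : p < q) (h : S' p = S' q) :
    p + (2 * k + 1) ≤ q ∧ B len p + 2 ≤ B len q := by
  obtain ⟨hp1, hp2, hp3⟩ := B_spec hk hlen0 hlen (S := S) hp
  obtain ⟨hq1, hq2, hq3⟩ := B_spec hk hlen0 hlen (S := S) hq
  obtain ⟨hc, hkey⟩ := key hk hlen0 hlen hS' hp hq h
  have hadj : ∀ m, 1 ≤ m → S m ≠ S (m + 1) := by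
    intro m hm he
    exact hsf ⟨m, 1, hm, le_refl 1, by intro j hj; interval_cases j; simpa using he⟩
  have hBle : B len p ≤ B len q := B_mono hk hlen0 hlen hp hq (le_of_lt hpq)
  have hne : B len p ≠ B len q := by
    intro he; rw [he] at hkey; omega
  have hB2 : B len p + 2 ≤ B len q := by
    by_contra hcon
    have he : B len q = B len p + 1 := by omega
    rw [he] at hc
    exact hadj _ hp3 hc
  refine ⟨?_, hB2⟩
  by_cases h3 : B len p + 3 ≤ B len q
  · -- at least 3 blocks in between: distance ≥ 3k
    have hmono : len (B len p - 1) + k * 3 ≤ len (B len q - 1) := by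
      have h4 : B len p - 1 + 3 ≤ B len q - 1 := by omega
      have h5 := len_add hk hlen (B len p - 1) 3
      have h6 := len_mono hk hlen h4
      omega
    omega
  · have he : B len q = B len p + 2 := by omega
    -- distance = W(Bp) + W(Bp+1)
    have e1 := hlen (B len p - 1)
    have e2 := hlen (B len p)
    have e3 : B len p - 1 + 1 = B len p := by omega
    rw [e3] at e1
    rw [he] at hc hkey
    have e4 : B len p + 2 - 1 = B len p + 1 := by omega
    rw [e4] at hkey
    -- q - p = W (B p) + W (B p + 1)
    have hd : q = p + W k S (B len p) + W k S (B len p + 1) := by omega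
    have w1 := W_ge (k := k) (S := S) (B len p)
    have w2 := W_ge (k := k) (S := S) (B len p + 1)
    have w3 := W_le (k := k) (S := S) (B len p)
    have w4 := W_le (k := k) (S := S) (B len p + 1)
    -- if both widths are k, we get an aba/bab pattern
    by_cases hx : W k S (B len p) = k ∧ W k S (B len p + 1) = k
    · exfalso
      have hn2 : S (B len p) ≠ 2 := by
        intro h2; have := hx.1; unfold W at this; rw [if_pos h2] at this; omega
      have hn2' : S (B len p + 1) ≠ 2 := by
        intro h2; have := hx.2; unfold W at this; rw [if_pos h2] at this; omega
      have hadj1 : S (B len p) ≠ S (B len p + 1) := hadj _ hp3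
      have hx0 : S (B len p) = 0 ∨ S (B len p) = 1 := by omega
      have hx1 : S (B len p + 1) = 0 ∨ S (B len p + 1) = 1 := by omega
      have hc2 : S (B len p + 2) = S (B len p) := hc.symm
      rcases hx0 with h0 | h0 <;> rcases hx1 with h1 | h1
      · rw [h0] at hadj1; rw [h1] at hadj1; exact hadj1 rfl
      · exact haba (B len p) hp3 ⟨h0, h1, by rw [hc2, h0]⟩
      · exact hbab (B len p) hp3 ⟨h0, h1, by rw [hc2, h0]⟩
      · rw [h0] at hadj1; rw [h1] at hadj1; exact hadj1 rfl
    · omega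

end

section Chains

lemma decChain {i : ℕ → ℕ} {t : ℕ} (hdec : ∀ j, 1 ≤ j → j < t → i (j + 1) < i j) :
    ∀ c a, 1 ≤ a → a < c → c ≤ t → i c < i a := by
  intro c
  induction c with
  | zero => intro a h1 h2 h3; omega
  | succ c ih =>
      intro a h1 h2 h3
      rcases Nat.lt_or_ge a c with h | h
      · have h4 : i c < i a := ih a h1 h (by omega)
        have h5 : i (c + 1) < i c := hdec c (by omega) (by omega)
        omega
      · have ha : a = c := by omega
        subst ha
        exact hdec a h1 (by omega)

lemma incChain {i : ℕ → ℕ} {t n : ℕ} (hinc : ∀ j, t ≤ j → j < n → i j < i (j + 1)) :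
    ∀ c a, t ≤ a → a < c → c ≤ n → i a < i c := by
  intro c
  induction c with
  | zero => intro a h1 h2 h3; omega
  | succ c ih =>
      intro a h1 h2 h3
      rcases Nat.lt_or_ge a c with h | h
      · have h4 : i a < i c := ih a h1 h (by omega)
        have h5 : i c < i (c + 1) := hinc c (by omega) (by omega)
        omega
      · have ha : a = c := by omega
        subst ha
        exact hinc a h1 (by omega)

end Chains

section Core

variable {k : ℕ} {S : ℕ → Fin 3} {len : ℕ → ℕ} {S' : ℕ → Fin 3 × ℕ}

lemma core (hk : 1 ≤ k) (hlen0 : len 0 = 0)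
    (hlen : ∀ m, len (m + 1) = len m + W k S (m + 1))
    (hS' : ∀ m p, len m < p → p ≤ len (m + 1) →
      S' p = (S (m + 1), if S (m + 1) = 2 then p - len m - 1 else p - len m))
    (hsf : SeqSquareFree S)
    (haba : ∀ p, 1 ≤ p → ¬ (S p = 0 ∧ S (p + 1) = 1 ∧ S (p + 2) = 0))
    (hbab : ∀ p, 1 ≤ p → ¬ (S p = 1 ∧ S (p + 1) = 0 ∧ S (p + 2) = 1))
    (r t : ℕ) (i : ℕ → ℕ) (hr : 1 ≤ r) (ht1 : 1 ≤ t) (ht2 : t ≤ 2 * r)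
    (hdec : ∀ j, 1 ≤ j → j < t → i (j + 1) < i j)
    (hinc : ∀ j, t ≤ j → j < 2 * r → i j < i (j + 1))
    (hstep : ∀ j, 1 ≤ j → j < 2 * r → i (j + 1) ≤ i j + k ∧ i j ≤ i (j + 1) + k)
    (hlab : ∀ j, 1 ≤ j → j ≤ r → S' (i j) = S' (i (j + r)))
    (hpos : ∀ j, 1 ≤ j → j ≤ 2 * r → 1 ≤ i j)
    (hd : ∀ j, 1 ≤ j → j ≤ r → i j + (2 * k + 1) ≤ i (j + r)) : False := by
  have hadj : ∀ m, 1 ≤ m → S m ≠ S (m + 1) := by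
    intro m hm he
    exact hsf ⟨m, 1, hm, le_refl 1, by intro j hj; interval_cases j; simpa using he⟩
  set b : ℕ → ℕ := fun j => B len (i j) with hb
  have hbs : ∀ j, 1 ≤ j → j ≤ 2 * r →
      len (b j - 1) < i j ∧ i j ≤ len (b j) ∧ 1 ≤ b j := by
    intro j h1 h2
    exact B_spec hk hlen0 hlen (S := S) (hpos j h1 h2)
  -- turn is in the first half
  have htr : t ≤ r := by
    by_contra hc
    have h1 : i (1 + r) < i 1 := decChain hdec (1 + r) 1 le_rfl (by omega) (by omega)
    have h2 := hd 1 le_rfl hr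
    omega
  -- pair facts
  have hpair : ∀ j, 1 ≤ j → j ≤ r →
      S (b j) = S (b (j + r)) ∧ i j + len (b (j + r) - 1) = i (j + r) + len (b j - 1) := by
    intro j h1 h2
    exact key hk hlen0 hlen hS' (hpos j h1 (by omega)) (hpos (j + r) (by omega) (by omega))
      (hlab j h1 h2)
  -- blocks jump by at least 2 between paired positions
  have hq2 : ∀ j, 1 ≤ j → j ≤ r → b j + 2 ≤ b (j + r) := by
    intro j h1 h2
    have := labelGap hk hlen0 hlen hS' hsf haba hbab (hpos j h1 (by omega))
      (hpos (j + r) (by omega) (by omega)) (by have := hd j h1 h2; omega) (hlab j h1 h2)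
    exact this.2
  -- the up-arm: blocks nondecreasing, steps at most 1
  have hup : ∀ j, t ≤ j → j < 2 * r → b j ≤ b (j + 1) ∧ b (j + 1) ≤ b j + 1 := by
    intro j h1 h2
    have hij : i j < i (j + 1) := hinc j h1 h2
    have hij2 := hstep j (by omega) h2
    constructor
    · exact B_mono hk hlen0 hlen (hpos j (by omega) (by omega))
        (hpos (j + 1) (by omega) (by omega)) (by omega)
    · exact B_step hk hlen0 hlen (hpos j (by omega) (by omega))
        (hpos (j + 1) (by omega) (by omega)) hij2.1
  -- the down-arm: blocks nonincreasing in j, steps at most 1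
  have hdown : ∀ j, 1 ≤ j → j < t → b (j + 1) ≤ b j ∧ b j ≤ b (j + 1) + 1 := by
    intro j h1 h2
    have hij : i (j + 1) < i j := hdec j h1 h2
    have hij2 := hstep j (by omega) (by omega)
    constructor
    · exact B_mono hk hlen0 hlen (hpos (j + 1) (by omega) (by omega))
        (hpos j (by omega) (by omega)) (by omega)
    · exact B_step hk hlen0 hlen (hpos (j + 1) (by omega) (by omega))
        (hpos j (by omega) (by omega)) hij2.2
  -- constancy of the block shift on the up-arm pairs
  have stepU : ∀ j, t ≤ j → j + 1 ≤ r → b (j + 1 + r) + b j = b (j + r) + b (j + 1) := by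
    intro j h1 h2
    have hk1 := (hpair j (by omega) (by omega)).2
    have hk2 := (hpair (j + 1) (by omega) h2).2
    have hu1 := hup j h1 (by omega)
    have hu2 := hup (j + r) (by omega) (by omega)
    have hb1 := hbs j (by omega) (by omega)
    have hb2 := hbs (j + r) (by omega) (by omega)
    have hi1 : i j < i (j + 1) := hinc j h1 (by omega)
    have hi2 : i (j + r) < i (j + r + 1) := hinc (j + r) (by omega) (by omega)
    have hs1 := hstep j (by omega) (by omega)
    have hs2 := hstep (j + r) (by omega) (by omega)
    have hq := hq2 j (by omega) (by omega)
    have hl1 := hlen (b j - 1)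
    have hl2 := hlen (b (j + r) - 1)
    have hw1 := W_ge (k := k) (S := S) (b j - 1 + 1)
    have hw2 := W_ge (k := k) (S := S) (b (j + r) - 1 + 1)
    have he1 : b j - 1 + 1 = b j := by omega
    have he2 : b (j + r) - 1 + 1 = b (j + r) := by omega
    rw [he1] at hl1 hw1
    rw [he2] at hl2 hw2
    have hea : j + 1 + r = j + r + 1 := by omega
    rw [hea] at hk2 ⊢
    rcases Nat.eq_or_lt_of_le hu1.1 with hA | hA <;>
      rcases Nat.eq_or_lt_of_le hu2.1 with hB | hB
    · -- both stay: ok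
      rw [← hA, ← hB]
    · -- bottom stays, top crosses: impossible
      exfalso
      have hBv : b (j + r + 1) = b (j + r) + 1 := by omega
      rw [← hA, hBv] at hk2
      have : b (j + r) + 1 - 1 = b (j + r) - 1 + 1 := by omega
      rw [this, he2, hl2] at hk2
      omega
    · -- bottom crosses, top stays: impossible
      exfalso
      have hAv : b (j + 1) = b j + 1 := by omega
      rw [hAv, ← hB] at hk2
      have : b j + 1 - 1 = b j - 1 + 1 := by omega
      rw [this, he1, hl1] at hk2
      omega
    · -- both cross
      have hAv : b (j + 1) = b j + 1 := by omega
      have hBv : b (j + r + 1) = b (j + r) + 1 := by omega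
      rw [hAv, hBv]
      ring
  -- Q: the constant block shift on the up-arm
  set Q : ℕ := b (t + r) - b t with hQdef
  have hQ : b (t + r) = b t + Q := by
    have := hq2 t ht1 htr; omega
  have hQconst : ∀ j, t ≤ j → j ≤ r → b (j + r) = b j + Q := by
    intro j h1
    induction j, h1 using Nat.le_induction with
    | base => intro _; exact hQ
    | succ j hj ih =>
        intro h2
        have hs := stepU j hj h2
        have hih := ih (by omega)
        have hq' := hq2 j (by omega) (by omega)
        omega
  -- coverage of the block interval [b t, b r] by up-arm pairs
  have hcov : ∀ x, b t ≤ x → x ≤ b r → ∃ j, t ≤ j ∧ j ≤ r ∧ b j = x := by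
    have main : ∀ c, t ≤ c → c ≤ r → ∀ x, b t ≤ x → x ≤ b c →
        ∃ j, t ≤ j ∧ j ≤ c ∧ b j = x := by
      intro c h1
      induction c, h1 using Nat.le_induction with
      | base => intro _ x hx1 hx2; exact ⟨t, le_rfl, le_rfl, by omega⟩
      | succ c hc ih =>
          intro h2 x hx1 hx2
          have hu := hup c hc (by omega)
          rcases le_or_gt x (b c) with h | h
          · obtain ⟨j, hj1, hj2, hj3⟩ := ih (by omega) x hx1 h
            exact ⟨j, hj1, by omega, hj3⟩
          · exact ⟨c + 1, by omega, le_rfl, by omega⟩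
    intro x hx1 hx2
    exact main r htr le_rfl x hx1 hx2
  -- periodicity of colors with period Q on [b t, b r]
  have hper : ∀ x, b t ≤ x → x ≤ b r → S x = S (x + Q) := by
    intro x hx1 hx2
    obtain ⟨j, hj1, hj2, hj3⟩ := hcov x hx1 hx2
    have h1 := (hpair j (by omega) hj2).1
    have h2 := hQconst j hj1 hj2
    rw [hj3] at h1 h2
    rw [← h2]
    exact h1
  -- climbing bound: from index r, t steps reach at most t blocks higher
  have hclimb : b t + Q ≤ b r + t := by
    have main : ∀ a, a ≤ r → b (r + a) ≤ b r + a := by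
      intro a ha
      induction a with
      | zero => simp
      | succ a ih =>
          have h1 : t ≤ r + a := by omega
          have h2 := hup (r + a) h1 (by omega)
          have h3 := ih (by omega)
          have he : r + (a + 1) = r + a + 1 := by omega
          rw [he]
          omega
    have h1 := main t htr
    have he : r + t = t + r := by omega
    rw [he] at h1
    omega
  -- mixed steps increase the shift strictly
  have stepM : ∀ j, 1 ≤ j → j < t → b (j + r) + b (j + 1) + 1 ≤ b (j + 1 + r) + b j := by
    intro j h1 h2
    have hk1 := (hpair j (by omega) (by omega)).2
    have hk2 := (hpair (j + 1) (by omega) (by omega)).2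
    have hu2 := hup (j + r) (by omega) (by omega)
    have hd1 := hdown j h1 h2
    have hb1 := hbs j (by omega) (by omega)
    have hb2 := hbs (j + r) (by omega) (by omega)
    have hi1 : i (j + 1) < i j := hdec j h1 h2
    have hi2 : i (j + r) < i (j + r + 1) := hinc (j + r) (by omega) (by omega)
    have hea : j + 1 + r = j + r + 1 := by omega
    rw [hea] at hk2 ⊢
    rcases Nat.eq_or_lt_of_le hd1.1 with hA | hA <;>
      rcases Nat.eq_or_lt_of_le hu2.1 with hB | hB
    · -- both stay: impossible
      exfalso
      rw [hA, ← hB] at hk2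
      omega
    · -- top crosses only: shift +1 at least
      have hBv : b (j + r + 1) = b (j + r) + 1 := by omega
      rw [hA] at hk2 ⊢
      omega
    · omega
    · omega
  -- Q is at least t + 1
  have hQbig : t + 1 ≤ Q := by
    have main : ∀ j, 1 ≤ j → j ≤ t → b j + (j + 1) ≤ b (j + r) := by
      intro j h1
      induction j, h1 using Nat.le_induction with
      | base => intro _; have := hq2 1 le_rfl (by omega); omega
      | succ j hj ih =>
          intro h2
          have hs := stepM j hj (by omega)
          have hih := ih (by omega)
          omega
    have h1 := main t ht1 le_rfl
    omega
  -- final case analysis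
  have hbt1 : 1 ≤ b t := (hbs t (by omega) (by omega)).2.2
  by_cases hcase : b t + Q ≤ b r + 1
  · -- direct square with period Q starting at block b t
    refine hsf ⟨b t, Q, hbt1, by omega, fun u hu => ?_⟩
    have h1 := hper (b t + u) (by omega) (by omega)
    rw [show b t + Q + u = b t + u + Q from by ring]
    exact h1
  · -- fold case
    have hBr : b r + 2 ≤ b t + Q := by omega
    have ht2' : 2 ≤ t := by omega
    have hd1 := hdown (t - 1) (by omega) (by omega)
    have hu1 := hup (t - 1 + r) (by omega) (by omega)
    rw [show t - 1 + 1 = t from by omega] at hd1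
    rw [show t - 1 + r + 1 = t + r from by omega] at hu1
    have hp1 := hpair (t - 1) (by omega) (by omega)
    have hp2 := hpair t (by omega) (by omega)
    have hc1 := hp1.1
    have hk1 := hp1.2
    have hc2 := hp2.1
    have hk2 := hp2.2
    have hidec : i t < i (t - 1) := by
      have := hdec (t - 1) (by omega) (by omega)
      rwa [show t - 1 + 1 = t from by omega] at this
    have hiinc : i (t - 1 + r) < i (t + r) := by
      have := hinc (t - 1 + r) (by omega) (by omega)
      rwa [show t - 1 + r + 1 = t + r from by omega] at this
    have hbq1 : 1 ≤ b (t - 1 + r) := (hbs (t - 1 + r) (by omega) (by omega)).2.2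
    rcases Nat.eq_or_lt_of_le hd1.1 with hA | hA <;>
      rcases Nat.eq_or_lt_of_le hu1.1 with hB | hB
    · -- both stay: impossible by offsets
      rw [← hA, hB] at hk1
      omega
    · -- bottom stays, top crosses: S (b t) and its successor share a color
      have hBv : b (t + r) = b (t - 1 + r) + 1 := by omega
      have hx : S (b (t - 1 + r)) = S (b (t - 1 + r) + 1) := by
        rw [← hBv, ← hc2, hA]; exact hc1.symm
      exact hadj _ hbq1 hx
    · -- bottom crosses, top stays
      have hAv : b (t - 1) = b t + 1 := by omega
      have hx : S (b t) = S (b t + 1) := by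
        rw [hc2, ← hB, ← hc1, hAv]
      exact hadj _ hbt1 hx
    · -- double crossing: the interesting case
      have hAv : b (t - 1) = b t + 1 := by omega
      have hBv : b (t + r) = b (t - 1 + r) + 1 := by omega
      -- widths of the blocks b t and b (t-1+r) are both k
      have hlb : len (b t) = len (b t - 1) + W k S (b t) := by
        have := hlen (b t - 1)
        rwa [show b t - 1 + 1 = b t from by omega] at this
      have hlq : len (b (t - 1 + r)) = len (b (t - 1 + r) - 1) + W k S (b (t - 1 + r)) := by
        have := hlen (b (t - 1 + r) - 1)
        rwa [show b (t - 1 + r) - 1 + 1 = b (t - 1 + r) from by omega] at this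
    -- rewrite the keys
      rw [hAv, show b t + 1 - 1 = b t from by omega] at hk1
      rw [hBv, show b (t - 1 + r) + 1 - 1 = b (t - 1 + r) from by omega] at hk2
      have hs1 : i (t - 1) ≤ i t + k := by
        have := (hstep (t - 1) (by omega) (by omega)).2
        rwa [show t - 1 + 1 = t from by omega] at this
      have hs2 : i (t + r) ≤ i (t - 1 + r) + k := by
        have := (hstep (t - 1 + r) (by omega) (by omega)).1
        rwa [show t - 1 + r + 1 = t + r from by omega] at this
      have hw1 := W_ge (k := k) (S := S) (b t)
      have hw2 := W_ge (k := k) (S := S) (b (t - 1 + r))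
      have hWb : W k S (b t) = k := by omega
      have hWq : W k S (b (t - 1 + r)) = k := by omega
      have hn1 : S (b t) ≠ 2 := by
        intro h2; unfold W at hWb; rw [if_pos h2] at hWb; omega
      have hn2 : S (b (t - 1 + r)) ≠ 2 := by
        intro h2; unfold W at hWq; rw [if_pos h2] at hWq; omega
      -- colors
      have hbr1 : b t + 1 ≤ b r := by omega
      have ex1 : S (b (t - 1 + r)) = S (b t + 1) := by rw [← hc1, hAv]
      have ex2 : S (b t + 1) = S (b t + 1 + Q) := hper (b t + 1) (by omega) hbr1
      have ex3 : S (b (t - 1 + r) + 1) = S (b t) := by rw [← hBv, ← hc2]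
      have ex4 : b (t - 1 + r) + 2 = b t + 1 + Q := by omega
      have exadj : S (b (t - 1 + r)) ≠ S (b (t - 1 + r) + 1) := hadj _ hbq1
      have efin1 : S (b (t - 1 + r) + 2) = S (b (t - 1 + r)) := by
        rw [ex4, ← ex2, ← ex1]
      have hv : ∀ v : Fin 3, v = 0 ∨ v = 1 ∨ v = 2 := by decide
      rcases hv (S (b (t - 1 + r))) with hx | hx | hx <;>
        rcases hv (S (b (t - 1 + r) + 1)) with hy | hy | hy
      · exact exadj (by rw [hx, hy])
      · exact haba (b (t - 1 + r)) hbq1 ⟨hx, hy, by rw [efin1, hx]⟩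
      · exact hn1 (by rw [← ex3, hy])
      · exact hbab (b (t - 1 + r)) hbq1 ⟨hx, hy, by rw [efin1, hx]⟩
      · exact exadj (by rw [hx, hy])
      · exact hn1 (by rw [← ex3, hy])
      · exact hn2 hx
      · exact hn2 hx
      · exact hn2 hx

end Core

end St17

/-- Let `S` be an infinite square-free sequence over `{a, b, c}` (encoded as `0, 1, 2`)
containing neither `aba` nor `bab`. Form `S'` by replacing each occurrence of `c` by the
block `c⁽⁰⁾, …, c⁽ᵏ⁾` (`k + 1` symbols) and each occurrence of `a` (resp. `b`) by
`a⁽¹⁾, …, a⁽ᵏ⁾` (resp. `b⁽¹⁾, …, b⁽ᵏ⁾`); here `len m` is the total length of the first `m`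
blocks. Then `S'` is a `k`-special sequence (over `3k + 1` symbols). -/
theorem stmt17 (k : ℕ) (hk : 1 ≤ k) (S : ℕ → Fin 3)
    (hsf : SeqSquareFree S)
    (haba : ∀ p, 1 ≤ p → ¬ (S p = 0 ∧ S (p + 1) = 1 ∧ S (p + 2) = 0))
    (hbab : ∀ p, 1 ≤ p → ¬ (S p = 1 ∧ S (p + 1) = 0 ∧ S (p + 2) = 1))
    (S' : ℕ → Fin 3 × ℕ) (len : ℕ → ℕ)
    (hlen0 : len 0 = 0)
    (hlen : ∀ m, len (m + 1) = len m + (if S (m + 1) = 2 then k + 1 else k))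
    (hS' : ∀ m p, len m < p → p ≤ len (m + 1) →
      S' p = (S (m + 1), if S (m + 1) = 2 then p - len m - 1 else p - len m)) :
    KSpecialInf k S' := by
  rintro ⟨r, m, i, ⟨hr, hm1, hm2, hlab, hdec, hinc, hstep, _⟩, hpos⟩
  have hlenW : ∀ m, len (m + 1) = len m + St17.W k S (m + 1) := hlen
  have hpos' : ∀ j, 1 ≤ j → j ≤ 2 * r → 1 ≤ i j := hpos
  -- trichotomy for each pair
  have tri : ∀ j, 1 ≤ j → j ≤ r →
      i j = i (j + r) ∨ i j + (2 * k + 1) ≤ i (j + r) ∨ i (j + r) + (2 * k + 1) ≤ i j := by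
    intro j h1 h2
    rcases lt_trichotomy (i j) (i (j + r)) with h | h | h
    · right; left
      exact (St17.labelGap hk hlen0 hlenW hS' hsf haba hbab (hpos j h1 (by omega))
        (hpos (j + r) (by omega) (by omega)) h (hlab j h1 h2)).1
    · left; exact h
    · right; right
      exact (St17.labelGap hk hlen0 hlenW hS' hsf haba hbab (hpos (j + r) (by omega) (by omega))
        (hpos j h1 (by omega)) h (hlab j h1 h2).symm).1
  -- the class of the pair is constant in j
  have allfrom : ∀ P : ℕ → Prop, (∀ j, 1 ≤ j → j + 1 ≤ r → P j → P (j + 1)) → P 1 →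
      ∀ j, 1 ≤ j → j ≤ r → P j := by
    intro P hstepP h1 j hj
    induction j, hj using Nat.le_induction with
    | base => intro _; exact h1
    | succ j hj ih => intro h2; exact hstepP j hj h2 (ih (by omega))
  have classes : (∀ j, 1 ≤ j → j ≤ r → i j = i (j + r)) ∨
      (∀ j, 1 ≤ j → j ≤ r → i j + (2 * k + 1) ≤ i (j + r)) ∨
      (∀ j, 1 ≤ j → j ≤ r → i (j + r) + (2 * k + 1) ≤ i j) := by
    have hsb : ∀ j, 1 ≤ j → j + 1 ≤ r →
        (i (j + 1) ≤ i j + k ∧ i j ≤ i (j + 1) + k) ∧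
        (i (j + r + 1) ≤ i (j + r) + k ∧ i (j + r) ≤ i (j + r + 1) + k) :=
      fun j h1 h2 => ⟨hstep j h1 (by omega), hstep (j + r) (by omega) (by omega)⟩
    have hea : ∀ j : ℕ, j + 1 + r = j + r + 1 := by omega
    rcases tri 1 le_rfl hr with h | h | h
    · left
      refine allfrom _ (fun j h1 h2 hP => ?_) h
      have := hsb j h1 h2
      rw [hea j]
      rcases tri (j + 1) (by omega) h2 with h' | h' | h' <;> rw [hea j] at h' <;> omega
    · right; left
      refine allfrom _ (fun j h1 h2 hP => ?_) h
      have := hsb j h1 h2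
      rw [hea j]
      rcases tri (j + 1) (by omega) h2 with h' | h' | h' <;> rw [hea j] at h' <;> omega
    · right; right
      refine allfrom _ (fun j h1 h2 hP => ?_) h
      have := hsb j h1 h2
      rw [hea j]
      rcases tri (j + 1) (by omega) h2 with h' | h' | h' <;> rw [hea j] at h' <;> omega
  rcases classes with hcl | hcl | hcl
  · -- all pairs equal: impossible because one side is strictly monotone across a pair
    rcases le_or_gt m r with hmr | hmr
    · have h1 : i m < i (m + r) := St17.incChain hinc (m + r) m le_rfl (by omega) (by omega)
      have h2 := hcl m (by omega) hmr
      omega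
    · have h1 : i (1 + r) < i 1 := St17.decChain hdec (1 + r) 1 le_rfl (by omega) (by omega)
      have h2 := hcl 1 le_rfl hr
      omega
  · -- increasing class: apply the core lemma directly with turn m
    exact St17.core hk hlen0 hlenW hS' hsf haba hbab r m i hr (by omega) hm2
      hdec hinc hstep hlab hpos' hcl
  · -- decreasing class: apply the core lemma to the reversed sequence
    set i' : ℕ → ℕ := fun j => i (2 * r + 1 - j) with hi'
    have e1 : ∀ j : ℕ, 1 ≤ j → i' (j + 1) = i (2 * r - j) := by
      intro j h1; show i (2 * r + 1 - (j + 1)) = i (2 * r - j); rw [show 2*r+1-(j+1) = 2*r - j from by omega]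
    refine St17.core hk hlen0 hlenW hS' hsf haba hbab r (2 * r + 1 - m) i' hr (by omega)
      (by omega) ?_ ?_ ?_ ?_ ?_ ?_
    · intro j h1 h2
      rw [e1 j h1]
      have := hinc (2 * r - j) (by omega) (by omega)
      rwa [show 2*r - j + 1 = 2*r+1-j from by omega] at this
    · intro j h1 h2
      rw [e1 j (by omega)]
      have := hdec (2 * r - j) (by omega) (by omega)
      rwa [show 2*r - j + 1 = 2*r+1-j from by omega] at this
    · intro j h1 h2
      rw [e1 j h1]
      have := hstep (2 * r - j) (by omega) (by omega)
      rw [show 2*r - j + 1 = 2*r+1-j from by omega] at this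
      exact ⟨this.2, this.1⟩
    · intro j h1 h2
      show S' (i (2*r+1-j)) = S' (i (2*r+1-(j+r)))
      rw [show 2*r+1-(j+r) = r+1-j from by omega]
      have := hlab (r + 1 - j) (by omega) (by omega)
      rw [show r+1-j+r = 2*r+1-j from by omega] at this
      exact this.symm
    · intro j h1 h2
      exact hpos (2 * r + 1 - j) (by omega) (by omega)
    · intro j h1 h2
      show i (2*r+1-j) + (2*k+1) ≤ i (2*r+1-(j+r))
      rw [show 2*r+1-(j+r) = r+1-j from by omega]
      have := hcl (r + 1 - j) (by omega) (by omega)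
      rwa [show r+1-j+r = 2*r+1-j from by omega] at this
end
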